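/- arXiv:math/0311322 — 5 statements merged into one kernel-verified Lean document; each statement's English description precedes it below -/
import Mathlib

section
/- Let K be a nonempty set, g : K → K a map, and u : K → ℂ a bounded function. Let λ > 1 be real, η ∈ ℂ with |η| = λ, and m ≥ 1 an integer. For j ≥ m−1 set s_j := C(j, m−1)·η^{j−m+1}, and for n ≥ m−1 and x ∈ K define v_n(x) := (1/(n^{m−1}·λ^n))·Σ_{j=m−1}^{n} s_j·u(g^{n−j}(x)). Then there exist a bounded function v : K → ℂ and a constant C > 0 such that sup_{x∈K} |(λ/η)^n·v_n(x) − v(x)| ≤ C/n for every integer n ≥ m. -/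
lemma aux_desc (n : ℕ) : ∀ (r p : ℕ), r ≤ p → p ≤ n →
    (n:ℝ)^r * n ≤ (p.descFactorial r : ℝ) * n + r * (((n:ℝ) - p) + r) * (n:ℝ)^r := by
  intro r
  induction r with
  | zero => intro p _ _; simp
  | succ r ih =>
    intro p hrp hpn
    have hrp' : r ≤ p := Nat.le_of_succ_le hrp
    have ihp := ih p hrp' hpn
    have hcast : ((p.descFactorial (r+1) : ℕ) : ℝ) = ((p:ℝ) - r) * (p.descFactorial r : ℝ) := by
      rw [Nat.descFactorial_succ]
      push_cast [Nat.cast_sub hrp']; ring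
    rw [hcast]
    have hd : (0:ℝ) ≤ (n:ℝ) - p := by
      have := (Nat.cast_le (α := ℝ)).2 hpn; linarith
    have hpr : (0:ℝ) ≤ (p:ℝ) - r := by
      have := (Nat.cast_le (α := ℝ)).2 hrp'; linarith
    have hn0 : (0:ℝ) ≤ (n:ℝ) := Nat.cast_nonneg n
    have hpow : (0:ℝ) ≤ (n:ℝ)^r := pow_nonneg hn0 r
    have hr0 : (0:ℝ) ≤ (r:ℝ) := Nat.cast_nonneg r
    have key : ((p:ℝ) - r) * ((p.descFactorial r : ℝ) * n) ≥
        ((p:ℝ) - r) * ((n:ℝ)^r * n - r * (((n:ℝ) - p) + r) * (n:ℝ)^r) := by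
      apply mul_le_mul_of_nonneg_left _ hpr
      linarith
    have hpn' : (p:ℝ) ≤ n := (Nat.cast_le (α := ℝ)).2 hpn
    rw [pow_succ]
    push_cast
    nlinarith [mul_nonneg (mul_nonneg hr0 (sq_nonneg ((n:ℝ)-p+r))) hpow, mul_nonneg hpow hn0]

lemma aux_coef (n k r : ℕ) (hn : r + 1 ≤ n) (hk : k ≤ n - r) :
    |((n-k).choose r : ℝ) * (((n:ℝ))^r)⁻¹ - ((r.factorial : ℝ))⁻¹| ≤
      r * ((k:ℝ) + r) / (r.factorial * n) := by
  set p := n - k with hp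
  have hrp : r ≤ p := by omega
  have hpn : p ≤ n := by omega
  have hkn : (n:ℝ) - p = k := by
    have h : p + k = n := by omega
    have := congrArg (fun t : ℕ => (t:ℝ)) h
    push_cast at this; linarith
  have hn0 : (0:ℝ) < n := by exact_mod_cast Nat.pos_of_ne_zero (by omega)
  have hnr : (0:ℝ) < (n:ℝ)^r := pow_pos hn0 r
  have hF : (0:ℝ) < (r.factorial:ℝ) := by exact_mod_cast r.factorial_pos
  have hD : (p.descFactorial r : ℝ) = (r.factorial:ℝ) * (p.choose r : ℝ) := by
    exact_mod_cast congrArg (fun t : ℕ => (t:ℝ)) (Nat.descFactorial_eq_factorial_mul_choose p r)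
  have hDle : (p.descFactorial r : ℝ) ≤ (n:ℝ)^r := by
    calc (p.descFactorial r : ℝ) ≤ (p:ℝ)^r := by exact_mod_cast p.descFactorial_le_pow r
      _ ≤ (n:ℝ)^r := pow_le_pow_left₀ (Nat.cast_nonneg p) (Nat.cast_le.2 hpn) r
  have key := aux_desc n r p hrp hpn
  rw [hkn] at key
  have h2 : (r.factorial:ℝ)⁻¹ - (p.choose r:ℝ) * ((n:ℝ)^r)⁻¹ =
      ((n:ℝ)^r - (r.factorial:ℝ) * (p.choose r:ℝ)) / ((r.factorial:ℝ) * (n:ℝ)^r) := by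
    field_simp
  rw [abs_sub_comm, abs_of_nonneg (by rw [h2]; exact div_nonneg (by rw [← hD]; linarith) (by positivity)),
    h2, div_le_div_iff₀ (by positivity) (by positivity)]
  rw [hD] at key
  nlinarith [mul_le_mul_of_nonneg_left key hF.le]

lemma aux_rw {K : Type*} (g : K → K) (u : K → ℂ) (lam : ℝ) (hlam : (lam:ℂ) ≠ 0)
    (η : ℂ) (hη : η ≠ 0) (r n : ℕ) (hn : r + 1 ≤ n) (x : K) :
    ((lam:ℂ)/η)^n * (((n:ℂ)^r * (lam:ℂ)^n)⁻¹ *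
        ∑ j ∈ Finset.Icc r n, (j.choose r : ℂ) * η^(j+1-(r+1)) * u (g^[n-j] x))
    = ((n:ℂ)^r)⁻¹ * (η⁻¹)^r *
        ∑ k ∈ Finset.range (n-r+1), ((n-k).choose r : ℂ) * ((η⁻¹)^k * u (g^[k] x)) := by
  have hn0 : (n:ℂ) ≠ 0 := by
    exact_mod_cast Nat.cast_ne_zero.2 (by omega)
  have hre : ∑ j ∈ Finset.Icc r n, (j.choose r : ℂ) * η^(j+1-(r+1)) * u (g^[n-j] x)
      = ∑ k ∈ Finset.range (n-r+1), ((n-k).choose r : ℂ) * η^((n-k)+1-(r+1)) * u (g^[n-(n-k)] x) := by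
    rw [← Finset.Ico_add_one_right_eq_Icc, Finset.sum_Ico_eq_sum_range]
    rw [← Finset.sum_range_reflect]
    have he : n + 1 - r = n - r + 1 := by omega
    rw [he]
    refine Finset.sum_congr rfl ?_
    intro k hk
    simp only [Finset.mem_range] at hk
    have : r + (n - r + 1 - 1 - k) = n - k := by omega
    rw [this]
  rw [hre, Finset.mul_sum, Finset.mul_sum, Finset.mul_sum]
  refine Finset.sum_congr rfl ?_
  intro k hk
  simp only [Finset.mem_range] at hk
  have h1 : n - (n - k) = k := by omega
  have h2 : (n - k) + 1 - (r + 1) = n - k - r := by omega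
  rw [h1, h2]
  have hsplit : (η:ℂ)^(n-k-r) * η^(k + r) = η^n := by
    rw [← pow_add]; congr 1; omega
  rw [div_pow]
  field_simp
  rw [← hsplit]
  have hk1 : η^k * η⁻¹^k = 1 := by rw [← mul_pow, mul_inv_cancel₀ hη, one_pow]
  have hr1 : η^r * η⁻¹^r = 1 := by rw [← mul_pow, mul_inv_cancel₀ hη, one_pow]
  linear_combination (-(((n - k).choose r : ℂ) * η ^ (n - k - r) * u (g^[k] x))) * hk1
    - (((n - k).choose r : ℂ) * η ^ (n - k - r) * u (g^[k] x) * (η^k * η⁻¹^k)) * hr1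

theorem stmt6 {K : Type*} [Nonempty K] (g : K → K) (u : K → ℂ)
    (hu : ∃ B : ℝ, ∀ x, ‖u x‖ ≤ B)
    (lam : ℝ) (hlam : 1 < lam) (η : ℂ) (hη : ‖η‖ = lam)
    (m : ℕ) (hm : 1 ≤ m)
    (v : ℕ → K → ℂ)
    (hv : ∀ n, m - 1 ≤ n → ∀ x, v n x =
      ((n : ℂ) ^ (m - 1) * (lam : ℂ) ^ n)⁻¹ *
        ∑ j ∈ Finset.Icc (m - 1) n,
          (j.choose (m - 1) : ℂ) * η ^ (j + 1 - m) * u (g^[n - j] x)) :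
    ∃ vlim : K → ℂ, (∃ B' : ℝ, ∀ x, ‖vlim x‖ ≤ B') ∧
      ∃ C : ℝ, 0 < C ∧ ∀ n : ℕ, m ≤ n → ∀ x,
        ‖((lam : ℂ) / η) ^ n * v n x - vlim x‖ ≤ C / n := by
  obtain ⟨r, rfl⟩ : ∃ r, m = r + 1 := ⟨m - 1, by omega⟩
  simp only [Nat.add_sub_cancel] at hv
  obtain ⟨B₀, hB₀⟩ := hu
  set B : ℝ := max B₀ 0 with hBdef
  have hB : ∀ x, ‖u x‖ ≤ B := fun x => (hB₀ x).trans (le_max_left _ _)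
  have hB0 : 0 ≤ B := le_max_right _ _
  have hlam0 : (0:ℝ) < lam := by linarith
  have hlamne : (lam:ℂ) ≠ 0 := by exact_mod_cast ne_of_gt hlam0
  have hη0 : η ≠ 0 := by
    intro h; rw [h, norm_zero] at hη; linarith
  set q : ℝ := lam⁻¹ with hqdef
  have hq0 : 0 < q := inv_pos.2 hlam0
  have hq1 : q < 1 := by
    rw [hqdef, inv_lt_one_iff₀]; right; exact hlam
  have hηinv : ‖(η⁻¹ : ℂ)‖ = q := by rw [norm_inv, hη]
  set w : ℕ → K → ℂ := fun k x => (η⁻¹)^k * u (g^[k] x) with hwdef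
  have hwn : ∀ k x, ‖w k x‖ ≤ B * q^k := by
    intro k x
    rw [hwdef]
    simp only [norm_mul, norm_pow, hηinv]
    rw [mul_comm]
    exact mul_le_mul_of_nonneg_right (hB _) (pow_nonneg hq0.le k)
  have hgeo : Summable (fun k : ℕ => B * q^k) :=
    (summable_geometric_of_lt_one hq0.le hq1).mul_left B
  have hsumw : ∀ x, Summable (fun k => w k x) := fun x =>
    Summable.of_norm_bounded hgeo (fun k => hwn k x)
  have hsumnw : ∀ x, Summable (fun k => ‖w k x‖) := fun x =>
    Summable.of_nonneg_of_le (fun k => norm_nonneg _) (fun k => hwn k x) hgeo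
  have htb : ∀ x, ‖∑' k, w k x‖ ≤ B * (1-q)⁻¹ := by
    intro x
    calc ‖∑' k, w k x‖ ≤ ∑' k, ‖w k x‖ := norm_tsum_le_tsum_norm (hsumnw x)
      _ ≤ ∑' k : ℕ, B * q^k := Summable.tsum_le_tsum (fun k => hwn k x) (hsumnw x) hgeo
      _ = B * (1-q)⁻¹ := by rw [tsum_mul_left, tsum_geometric_of_lt_one hq0.le hq1]
  refine ⟨fun x => ((r.factorial : ℂ))⁻¹ * (η⁻¹)^r * ∑' k, w k x, ?_, ?_⟩
  · refine ⟨(r.factorial : ℝ)⁻¹ * (B * (1-q)⁻¹), fun x => ?_⟩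
    rw [norm_mul, norm_mul, norm_inv, norm_pow, hηinv, Complex.norm_natCast]
    have h1 : q ^ r ≤ 1 := pow_le_one₀ hq0.le hq1.le
    have h2 : (0:ℝ) ≤ (r.factorial:ℝ)⁻¹ := by positivity
    calc (r.factorial:ℝ)⁻¹ * q^r * ‖∑' k, w k x‖
        ≤ (r.factorial:ℝ)⁻¹ * 1 * (B * (1-q)⁻¹) := by
          apply mul_le_mul (by apply mul_le_mul_of_nonneg_left h1 h2) (htb x) (norm_nonneg _)
          positivity
      _ = (r.factorial:ℝ)⁻¹ * (B * (1-q)⁻¹) := by ring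
  -- constants
  have hS1 : Summable (fun k:ℕ => (k:ℝ) * q^k) := by
    have := summable_pow_mul_geometric_of_norm_lt_one (R := ℝ) 1 (r := q)
      (by rw [Real.norm_eq_abs, abs_of_pos hq0]; exact hq1)
    simpa using this
  have hS2 : Summable (fun k:ℕ => (r:ℝ) * q^k) :=
    (summable_geometric_of_lt_one hq0.le hq1).mul_left _
  have hSsum : Summable (fun k:ℕ => ((k:ℝ) + r) * q^k) := by
    have := hS1.add hS2
    simpa [add_mul] using this
  set S : ℝ := ∑' k:ℕ, ((k:ℝ) + r) * q^k with hSdef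
  have hS0 : 0 ≤ S := tsum_nonneg (fun k => by positivity)
  have hSpart : ∀ N : ℕ, ∑ k ∈ Finset.range N, ((k:ℝ) + r) * q^k ≤ S :=
    fun N => Summable.sum_le_tsum (Finset.range N) (fun i _ => by positivity) hSsum
  have hFpos : (0:ℝ) < (r.factorial:ℝ) := by exact_mod_cast r.factorial_pos
  set C₁ : ℝ := B * r * S / r.factorial with hC₁def
  set C₂ : ℝ := (r.factorial:ℝ)⁻¹ * (B * lam^r * (1-q)⁻¹ * (lam-1)⁻¹) with hC₂def
  have hC₁0 : 0 ≤ C₁ := by positivity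
  have hC₂0 : 0 ≤ C₂ := by
    have : (0:ℝ) < 1 - q := by linarith
    have : (0:ℝ) < lam - 1 := by linarith
    positivity
  refine ⟨C₁ + C₂ + 1, by linarith, ?_⟩
  intro n hn x
  have hnm : r + 1 ≤ n := hn
  have hnpos : (0:ℝ) < n := by exact_mod_cast Nat.pos_of_ne_zero (by omega)
  set N : ℕ := n - r + 1 with hNdef
  -- step 1
  have e1 : ((lam:ℂ)/η)^n * v n x = ((n:ℂ)^r)⁻¹ * (η⁻¹)^r *
      ∑ k ∈ Finset.range N, ((n-k).choose r : ℂ) * w k x := by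
    rw [hv n (by omega) x]
    exact aux_rw g u lam hlamne η hη0 r n hnm x
  -- step 2 : tsum split
  have hsplit : ∑' k, w k x = (∑ k ∈ Finset.range N, w k x) + ∑' k, w (k + N) x :=
    ((hsumw x).sum_add_tsum_nat_add N).symm
  -- step 3 : sum identity
  have hS3 : ∑ k ∈ Finset.range N, ((((n-k).choose r : ℂ)) * ((n:ℂ)^r)⁻¹ - ((r.factorial:ℂ))⁻¹) * w k x
      = ((n:ℂ)^r)⁻¹ * ∑ k ∈ Finset.range N, ((n-k).choose r : ℂ) * w k x
        - ((r.factorial:ℂ))⁻¹ * ∑ k ∈ Finset.range N, w k x := by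
    rw [Finset.mul_sum, Finset.mul_sum, ← Finset.sum_sub_distrib]
    refine Finset.sum_congr rfl ?_
    intro k _
    ring
  have e2 : ((lam:ℂ)/η)^n * v n x
      - ((r.factorial : ℂ))⁻¹ * (η⁻¹)^r * ∑' k, w k x
      = (η⁻¹)^r * ((∑ k ∈ Finset.range N,
          ((((n-k).choose r : ℂ)) * ((n:ℂ)^r)⁻¹ - ((r.factorial:ℂ))⁻¹) * w k x)
        - ((r.factorial:ℂ))⁻¹ * ∑' k, w (k+N) x) := by
    rw [e1, hsplit, hS3]
    ring
  rw [e2]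
  -- step 4 : norms
  have hcoef : ∀ k ∈ Finset.range N,
      ‖((((n-k).choose r : ℂ)) * ((n:ℂ)^r)⁻¹ - ((r.factorial:ℂ))⁻¹) * w k x‖ ≤
        (r * ((k:ℝ) + r) / (r.factorial * n)) * (B * q^k) := by
    intro k hk
    simp only [Finset.mem_range] at hk
    have hkn : k ≤ n - r := by omega
    have hcast : ((((n-k).choose r : ℂ)) * ((n:ℂ)^r)⁻¹ - ((r.factorial:ℂ))⁻¹)
        = ((((n-k).choose r : ℝ) * (((n:ℝ))^r)⁻¹ - ((r.factorial : ℝ))⁻¹ : ℝ) : ℂ) := by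
      push_cast
      ring
    rw [norm_mul, hcast, Complex.norm_real]
    exact mul_le_mul (aux_coef n k r hnm hkn) (hwn k x) (norm_nonneg _) (by positivity)
  have hsum_bound : ‖∑ k ∈ Finset.range N,
      ((((n-k).choose r : ℂ)) * ((n:ℂ)^r)⁻¹ - ((r.factorial:ℂ))⁻¹) * w k x‖ ≤ C₁ / n := by
    calc ‖∑ k ∈ Finset.range N, ((((n-k).choose r : ℂ)) * ((n:ℂ)^r)⁻¹ - ((r.factorial:ℂ))⁻¹) * w k x‖
        ≤ ∑ k ∈ Finset.range N, ‖((((n-k).choose r : ℂ)) * ((n:ℂ)^r)⁻¹ - ((r.factorial:ℂ))⁻¹) * w k x‖ :=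
          norm_sum_le _ _
      _ ≤ ∑ k ∈ Finset.range N, (r * ((k:ℝ) + r) / (r.factorial * n)) * (B * q^k) :=
          Finset.sum_le_sum hcoef
      _ = (B * r / (r.factorial * n)) * ∑ k ∈ Finset.range N, ((k:ℝ) + r) * q^k := by
          rw [Finset.mul_sum]
          refine Finset.sum_congr rfl ?_
          intro k _
          ring
      _ ≤ (B * r / (r.factorial * n)) * S := by
          apply mul_le_mul_of_nonneg_left (hSpart N) (by positivity)
      _ = C₁ / n := by
          rw [hC₁def]
          field_simp
  have htail : ‖∑' k, w (k+N) x‖ ≤ B * q^N * (1-q)⁻¹ := by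
    have hb : ∀ k : ℕ, ‖w (k+N) x‖ ≤ (B * q^N) * q^k := by
      intro k
      calc ‖w (k+N) x‖ ≤ B * q^(k+N) := hwn (k+N) x
        _ = (B * q^N) * q^k := by rw [pow_add]; ring
    have hgeo2 : Summable (fun k : ℕ => (B * q^N) * q^k) :=
      (summable_geometric_of_lt_one hq0.le hq1).mul_left _
    calc ‖∑' k, w (k+N) x‖ ≤ ∑' k, ‖w (k+N) x‖ :=
          norm_tsum_le_tsum_norm ((hsumnw x).comp_injective (add_left_injective N))
      _ ≤ ∑' k : ℕ, (B * q^N) * q^k := by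
          apply Summable.tsum_le_tsum hb ((hsumnw x).comp_injective (add_left_injective N)) hgeo2
      _ = B * q^N * (1-q)⁻¹ := by rw [tsum_mul_left, tsum_geometric_of_lt_one hq0.le hq1]
  -- q^N ≤ lam^r * q^n  and  q^n ≤ ((lam-1)*n)⁻¹
  have hqN : q^N ≤ lam^r * ((lam-1) * n)⁻¹ := by
    have h1 : q^N ≤ q^(n-r) :=
      pow_le_pow_of_le_one hq0.le hq1.le (by omega)
    have hql : q * lam = 1 := inv_mul_cancel₀ (ne_of_gt hlam0)
    have h2 : q^(n-r) = q^n * lam^r := by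
      have : q^(n-r) * (q * lam)^r = q^n * lam^r := by
        rw [mul_pow, ← mul_assoc, ← pow_add]
        congr 2
        omega
      rw [hql, one_pow, mul_one] at this
      exact this
    have h3 : q^n ≤ ((lam-1) * n)⁻¹ := by
      have hp : 1 + (n:ℝ) * (lam - 1) ≤ (1 + (lam - 1))^n :=
        one_add_mul_le_pow (by linarith) n
      have hlamn : (lam - 1) * n ≤ lam ^ n := by
        have : (1 : ℝ) + (lam - 1) = lam := by ring
        rw [this] at hp
        nlinarith
      have hpos : (0:ℝ) < (lam - 1) * n := by
        have : (0:ℝ) < lam - 1 := by linarith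
        positivity
      have : q^n = (lam^n)⁻¹ := by rw [hqdef, inv_pow]
      rw [this]
      exact inv_anti₀ hpos hlamn
    calc q^N ≤ q^(n-r) := h1
      _ = q^n * lam^r := h2
      _ ≤ ((lam-1) * n)⁻¹ * lam^r := by
          apply mul_le_mul_of_nonneg_right h3 (by positivity)
      _ = lam^r * ((lam-1) * n)⁻¹ := by ring
  have htail2 : ‖((r.factorial:ℂ))⁻¹ * ∑' k, w (k+N) x‖ ≤ C₂ / n := by
    rw [norm_mul, norm_inv, Complex.norm_natCast]
    have h1q : (0:ℝ) < 1 - q := by linarith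
    have hl1 : (0:ℝ) < lam - 1 := by linarith
    calc (r.factorial:ℝ)⁻¹ * ‖∑' k, w (k+N) x‖
        ≤ (r.factorial:ℝ)⁻¹ * (B * q^N * (1-q)⁻¹) := by
          apply mul_le_mul_of_nonneg_left htail (by positivity)
      _ ≤ (r.factorial:ℝ)⁻¹ * (B * (lam^r * ((lam-1) * n)⁻¹) * (1-q)⁻¹) := by
          apply mul_le_mul_of_nonneg_left _ (by positivity)
          apply mul_le_mul_of_nonneg_right _ (by positivity)
          apply mul_le_mul_of_nonneg_left hqN hB0
      _ = C₂ / n := by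
          rw [hC₂def, mul_inv, div_eq_mul_inv]
          ring
  calc ‖(η⁻¹)^r * ((∑ k ∈ Finset.range N,
          ((((n-k).choose r : ℂ)) * ((n:ℂ)^r)⁻¹ - ((r.factorial:ℂ))⁻¹) * w k x)
        - ((r.factorial:ℂ))⁻¹ * ∑' k, w (k+N) x)‖
      = ‖(η⁻¹ : ℂ)‖^r * ‖(∑ k ∈ Finset.range N,
          ((((n-k).choose r : ℂ)) * ((n:ℂ)^r)⁻¹ - ((r.factorial:ℂ))⁻¹) * w k x)
        - ((r.factorial:ℂ))⁻¹ * ∑' k, w (k+N) x‖ := by rw [norm_mul, norm_pow]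
    _ ≤ 1 * (C₁ / n + C₂ / n) := by
        apply mul_le_mul
        · rw [hηinv]; exact pow_le_one₀ hq0.le hq1.le
        · exact (norm_sub_le _ _).trans (add_le_add hsum_bound htail2)
        · exact norm_nonneg _
        · exact zero_le_one
    _ ≤ (C₁ + C₂ + 1) / n := by
        rw [one_mul, ← add_div]
        exact div_le_div_of_nonneg_right (by linarith) hnpos.le
end

section
/- Let K be a nonempty set, g : K → K a map, and u : K → ℂ a bounded function. Let λ > 1 be real, η ∈ ℂ with |η| = λ, and m ≥ 1 an integer. For j ≥ m−1 set s_j := C(j, m−1)·η^{j−m+1}, and for n ≥ m−1 and x ∈ K define v_n(x) := (1/(n^{m−1}·λ^n))·Σ_{j=m−1}^{n} s_j·u(g^{n−j}(x)). Then there exists a constant C > 0 such that sup_{x∈K} |v_{n+1}(x) − (η/λ)·v_n(x)| ≤ C/n² for every integer n ≥ m. -/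
open Finset

lemma chdiff (q : ℕ) : ∀ (j n : ℕ), j ≤ n →
    n.choose (q+1) - j.choose (q+1) ≤ (n - j) * n.choose q := by
  intro j n
  induction n with
  | zero => intro h; interval_cases j; simp
  | succ n ih =>
    intro h
    rcases Nat.eq_or_lt_of_le h with rfl | h
    · simp
    · have hjn : j ≤ n := Nat.lt_succ_iff.mp h
      have h1 := ih hjn
      have hp : (n+1).choose (q+1) = n.choose q + n.choose (q+1) := Nat.choose_succ_succ n q
      have h2 : n.choose q ≤ (n+1).choose q := Nat.choose_le_choose q (Nat.le_succ n)
      have h4 : (n - j) * n.choose q ≤ (n - j) * (n+1).choose q :=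
        Nat.mul_le_mul_left _ h2
      have h5 : (n+1-j) * (n+1).choose q = (n-j)*(n+1).choose q + (n+1).choose q := by
        rw [Nat.succ_sub hjn, Nat.succ_mul]
      omega

lemma expand_pow (p n : ℕ) : (n+1)^p = ∑ k ∈ range (p+1), n ^ k * p.choose k := by
  simpa using add_pow n 1 p

lemma pow_succ_le (p n : ℕ) (hn : 1 ≤ n) : (n+1)^p ≤ n^p + 2^p * n^(p-1) := by
  rcases p with _ | r
  · simp
  rw [expand_pow, sum_range_succ, Nat.choose_self, mul_one, Nat.add_comm]
  simp only [Nat.add_sub_cancel]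
  gcongr
  calc ∑ k ∈ range (r+1), n ^ k * (r+1).choose k
      ≤ ∑ k ∈ range (r+1), n ^ r * (r+1).choose k := by
        refine sum_le_sum fun k hk => ?_
        have := mem_range.mp hk
        exact Nat.mul_le_mul_right _ (Nat.pow_le_pow_right hn (by omega))
    _ ≤ n ^ r * ∑ k ∈ range (r+2), (r+1).choose k := by
        rw [← mul_sum]
        exact Nat.mul_le_mul_left _ (sum_le_sum_of_subset (by intro x; simp; omega))
    _ = 2^(r+1) * n^r := by rw [Nat.sum_range_choose]; ring

lemma pow_succ_ge (p n : ℕ) : n^p + p * n^(p-1) ≤ (n+1)^p := by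
  rcases p with _ | r
  · simp
  rw [expand_pow, sum_range_succ, sum_range_succ, Nat.choose_self, mul_one,
    Nat.choose_succ_self_right]
  simp only [Nat.add_sub_cancel]
  have : (r+1) * n ^ r ≤ n ^ r * (r+1) := by ring_nf; omega
  omega

lemma pow_succ_le3 (r n : ℕ) (hn : 1 ≤ n) :
    (n+1)^(r+2) ≤ n^(r+2) + (r+2)*n^(r+1) + 2^(r+2)*n^r := by
  rw [expand_pow, sum_range_succ, sum_range_succ, Nat.choose_self, mul_one,
    Nat.choose_succ_self_right]
  have h1 : ∑ k ∈ range (r+1), n ^ k * (r+2).choose k ≤ 2^(r+2)*n^r := by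
    calc ∑ k ∈ range (r+1), n ^ k * (r+2).choose k
        ≤ ∑ k ∈ range (r+1), n ^ r * (r+2).choose k := by
          refine sum_le_sum fun k hk => ?_
          have := mem_range.mp hk
          exact Nat.mul_le_mul_right _ (Nat.pow_le_pow_right hn (by omega))
      _ ≤ n ^ r * ∑ k ∈ range (r+3), (r+2).choose k := by
          rw [← mul_sum]
          exact Nat.mul_le_mul_left _ (sum_le_sum_of_subset (by intro x; simp; omega))
      _ = 2^(r+2) * n^r := by rw [Nat.sum_range_choose]; ring
  have : n ^ (r+1) * (r+1+1) = (r+2) * n^(r+1) := by ring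
  omega
lemma chdiffZ (q j n : ℕ) (h : j ≤ n) :
    (n.choose (q+1) : ℤ) - j.choose (q+1) ≤ ((n:ℤ) - j) * n.choose q := by
  have h1 := chdiff q j n h
  have h2 : j.choose (q+1) ≤ n.choose (q+1) := Nat.choose_le_choose _ h
  have := (Nat.cast_le (α := ℤ)).mpr h1
  push_cast [Nat.cast_sub h2, Nat.cast_sub h] at this
  linarith

set_option maxHeartbeats 1000000 in
lemma keyZ (q n j : ℕ) (hj : q + 1 ≤ j) (hjn : j ≤ n) :
    |(n:ℤ)^(q+1) * ((j+1).choose (q+1) : ℤ) - ((n:ℤ)+1)^(q+1) * (j.choose (q+1) : ℤ)|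
      ≤ ((q:ℤ) + 1 + 2^(q+2)) * (n:ℤ)^(2*q) * ((n:ℤ) - (j:ℤ) + 1) := by
  have hn1 : 1 ≤ n := le_trans (by omega) hjn
  have hN1 : (1:ℤ) ≤ (n:ℤ) := by exact_mod_cast hn1
  have hK : (0:ℤ) ≤ (n:ℤ) - j := by
    have : (j:ℤ) ≤ n := by exact_mod_cast hjn
    linarith
  have hpow : ∀ k : ℕ, (0:ℤ) ≤ (n:ℤ)^k := fun k => pow_nonneg (by linarith) k
  have hpascal : ((j+1).choose (q+1) : ℤ) = (j.choose q : ℤ) + (j.choose (q+1) : ℤ) := by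
    exact_mod_cast congrArg (Nat.cast (R := ℤ)) (Nat.choose_succ_succ j q)
  have hb : (n:ℤ)^(q+1) * ((j+1).choose (q+1) : ℤ) - ((n:ℤ)+1)^(q+1) * (j.choose (q+1):ℤ)
      = ((n:ℤ)^(q+1)*(n.choose q : ℤ) - (((n:ℤ)+1)^(q+1) - (n:ℤ)^(q+1))*(n.choose (q+1):ℤ))
        - ((n:ℤ)^(q+1)*((n.choose q:ℤ)-(j.choose q:ℤ))
            - (((n:ℤ)+1)^(q+1) - (n:ℤ)^(q+1))*((n.choose (q+1):ℤ)-(j.choose (q+1):ℤ))) := by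
    rw [hpascal]; ring
  have hCnq : (n.choose q : ℤ) ≤ (n:ℤ)^q := by exact_mod_cast Nat.choose_le_pow n q
  have hCnp : (n.choose (q+1) : ℤ) ≤ (n:ℤ)^(q+1) := by exact_mod_cast Nat.choose_le_pow n (q+1)
  have hCnq0 : (0:ℤ) ≤ (n.choose q : ℤ) := Int.natCast_nonneg _
  have hCnp0 : (0:ℤ) ≤ (n.choose (q+1) : ℤ) := Int.natCast_nonneg _
  have hdiffq : (0:ℤ) ≤ (n.choose q : ℤ) - (j.choose q : ℤ) := by
    have := Nat.choose_le_choose q hjn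
    have : (j.choose q : ℤ) ≤ (n.choose q : ℤ) := by exact_mod_cast this
    linarith
  have hdiffp : (0:ℤ) ≤ (n.choose (q+1) : ℤ) - (j.choose (q+1) : ℤ) := by
    have := Nat.choose_le_choose (q+1) hjn
    have : (j.choose (q+1) : ℤ) ≤ (n.choose (q+1) : ℤ) := by exact_mod_cast this
    linarith
  have hd2 : (n.choose (q+1):ℤ) - (j.choose (q+1):ℤ) ≤ ((n:ℤ) - j) * (n.choose q:ℤ) :=
    chdiffZ q j n hjn
  have hDub : ((n:ℤ)+1)^(q+1) - (n:ℤ)^(q+1) ≤ 2^(q+1) * (n:ℤ)^q := by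
    have h := pow_succ_le (q+1) n hn1
    rw [Nat.add_sub_cancel] at h
    have := (Nat.cast_le (α := ℤ)).mpr h
    push_cast at this
    linarith
  have hDlb : ((q:ℤ)+1) * (n:ℤ)^q ≤ ((n:ℤ)+1)^(q+1) - (n:ℤ)^(q+1) := by
    have h := pow_succ_ge (q+1) n
    rw [Nat.add_sub_cancel] at h
    have := (Nat.cast_le (α := ℤ)).mpr h
    push_cast at this
    linarith
  have hD0 : (0:ℤ) ≤ ((n:ℤ)+1)^(q+1) - (n:ℤ)^(q+1) := by
    refine le_trans ?_ hDlb; positivity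
  have t1 : (n:ℤ)^(q+1)*((n.choose q:ℤ) - (j.choose q:ℤ)) ≤ ((n:ℤ) - (j:ℤ)) * (n:ℤ)^(2*q) := by
    rcases Nat.eq_zero_or_pos q with rfl | hq
    · simp only [Nat.choose_zero_right]
      simpa using mul_nonneg hK (hpow 0)
    · obtain ⟨r, rfl⟩ := Nat.exists_eq_add_of_le' hq
      have hd1 : (n.choose (r+1):ℤ) - (j.choose (r+1):ℤ) ≤ ((n:ℤ) - j) * (n.choose r : ℤ) :=
        chdiffZ r j n hjn
      have hCnr : (n.choose r : ℤ) ≤ (n:ℤ)^r := by exact_mod_cast Nat.choose_le_pow n r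
      calc (n:ℤ)^(r+1+1)*((n.choose (r+1):ℤ) - (j.choose (r+1):ℤ))
          ≤ (n:ℤ)^(r+1+1) * (((n:ℤ)-j) * (n:ℤ)^r) := by
            apply mul_le_mul_of_nonneg_left _ (hpow _)
            exact le_trans hd1 (mul_le_mul_of_nonneg_left hCnr hK)
        _ = ((n:ℤ) - j) * (n:ℤ)^(2*(r+1)) := by ring
  have t2 : (((n:ℤ)+1)^(q+1) - (n:ℤ)^(q+1))*((n.choose (q+1):ℤ) - (j.choose (q+1):ℤ))
      ≤ 2^(q+1) * (((n:ℤ) - j) * (n:ℤ)^(2*q)) := by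
    calc (((n:ℤ)+1)^(q+1) - (n:ℤ)^(q+1))*((n.choose (q+1):ℤ) - (j.choose (q+1):ℤ))
        ≤ (2^(q+1) * (n:ℤ)^q) * (((n:ℤ)-j) * (n:ℤ)^q) := by
          apply mul_le_mul hDub (le_trans hd2 (mul_le_mul_of_nonneg_left hCnq hK)) hdiffp
          positivity
      _ = 2^(q+1) * (((n:ℤ) - j) * (n:ℤ)^(2*q)) := by ring
  have hprod : ((q:ℤ)+1) * (n.choose (q+1):ℤ) = (n.choose q:ℤ) * ((n:ℤ) - q) := by
    have h := Nat.choose_succ_right_eq n q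
    have hqn : q ≤ n := by omega
    have := congrArg (Nat.cast (R := ℤ)) h
    push_cast [Nat.cast_sub hqn] at this
    linarith
  have t3 : |(n:ℤ)^(q+1)*(n.choose q:ℤ) - (((n:ℤ)+1)^(q+1) - (n:ℤ)^(q+1))*(n.choose (q+1):ℤ)|
      ≤ ((q:ℤ) + 2^(q+1)) * (n:ℤ)^(2*q) := by
    rcases Nat.eq_zero_or_pos q with rfl | hq
    · have hCnp1 : (n.choose 1 : ℤ) = (n:ℤ) := by
        simp [Nat.choose_one_right]
      have h0 : (n:ℤ)^(0+1)*(n.choose 0:ℤ) - (((n:ℤ)+1)^(0+1) - (n:ℤ)^(0+1))*(n.choose (0+1):ℤ)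
          = 0 := by
        simp [hCnp1]
      rw [h0, abs_zero]
      positivity
    · obtain ⟨r, rfl⟩ := Nat.exists_eq_add_of_le' hq
      set q' := r + 1 with hq'
      have hR3 : ((n:ℤ)+1)^(q'+1) - (n:ℤ)^(q'+1) ≤ ((q':ℤ)+1) * (n:ℤ)^q' + 2^(q'+1) * (n:ℤ)^r := by
        have := (Nat.cast_le (α := ℤ)).mpr (pow_succ_le3 r n hn1)
        push_cast at this
        have h1 : q' + 1 = r + 2 := by omega
        rw [h1]
        push_cast
        rw [hq']; push_cast; linarith
      have hident : (n:ℤ)^(q'+1)*(n.choose q':ℤ)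
            - (((n:ℤ)+1)^(q'+1) - (n:ℤ)^(q'+1))*(n.choose (q'+1):ℤ)
          = (q':ℤ)*(n:ℤ)^q'*(n.choose q':ℤ)
            - ((((n:ℤ)+1)^(q'+1) - (n:ℤ)^(q'+1)) - ((q':ℤ)+1)*(n:ℤ)^q')*(n.choose (q'+1):ℤ) := by
        linear_combination (-(n:ℤ)^q') * hprod
      rw [hident]
      have hRub : (((n:ℤ)+1)^(q'+1) - (n:ℤ)^(q'+1)) - ((q':ℤ)+1)*(n:ℤ)^q' ≤ 2^(q'+1) * (n:ℤ)^r := by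
        linarith
      have hRlb : 0 ≤ (((n:ℤ)+1)^(q'+1) - (n:ℤ)^(q'+1)) - ((q':ℤ)+1)*(n:ℤ)^q' := by linarith
      have hu1 : (q':ℤ)*(n:ℤ)^q'*(n.choose q':ℤ) ≤ (q':ℤ)*(n:ℤ)^(2*q') := by
        calc (q':ℤ)*(n:ℤ)^q'*(n.choose q':ℤ) ≤ (q':ℤ)*(n:ℤ)^q'*(n:ℤ)^q' := by
              apply mul_le_mul_of_nonneg_left hCnq; positivity
          _ = (q':ℤ)*(n:ℤ)^(2*q') := by ring
      have hu2 : ((((n:ℤ)+1)^(q'+1) - (n:ℤ)^(q'+1)) - ((q':ℤ)+1)*(n:ℤ)^q')*(n.choose (q'+1):ℤ)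
          ≤ 2^(q'+1)*(n:ℤ)^(2*q') := by
        calc ((((n:ℤ)+1)^(q'+1) - (n:ℤ)^(q'+1)) - ((q':ℤ)+1)*(n:ℤ)^q')*(n.choose (q'+1):ℤ)
            ≤ (2^(q'+1) * (n:ℤ)^r)*(n:ℤ)^(q'+1) := by
              apply mul_le_mul hRub hCnp hCnp0 (by positivity)
          _ = 2^(q'+1)*(n:ℤ)^(2*q') := by rw [hq']; ring
      have hX0 : 0 ≤ (q':ℤ)*(n:ℤ)^q'*(n.choose q':ℤ) := by positivity
      have hY0 : 0 ≤ ((((n:ℤ)+1)^(q'+1) - (n:ℤ)^(q'+1)) - ((q':ℤ)+1)*(n:ℤ)^q')*(n.choose (q'+1):ℤ) :=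
        mul_nonneg hRlb hCnp0
      calc |(q':ℤ)*(n:ℤ)^q'*(n.choose q':ℤ)
            - ((((n:ℤ)+1)^(q'+1) - (n:ℤ)^(q'+1)) - ((q':ℤ)+1)*(n:ℤ)^q')*(n.choose (q'+1):ℤ)|
          ≤ |(q':ℤ)*(n:ℤ)^q'*(n.choose q':ℤ)|
            + |((((n:ℤ)+1)^(q'+1) - (n:ℤ)^(q'+1)) - ((q':ℤ)+1)*(n:ℤ)^q')*(n.choose (q'+1):ℤ)| :=
            abs_sub _ _
        _ = (q':ℤ)*(n:ℤ)^q'*(n.choose q':ℤ)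
            + ((((n:ℤ)+1)^(q'+1) - (n:ℤ)^(q'+1)) - ((q':ℤ)+1)*(n:ℤ)^q')*(n.choose (q'+1):ℤ) := by
            rw [abs_of_nonneg hX0, abs_of_nonneg hY0]
        _ ≤ ((q':ℤ) + 2^(q'+1)) * (n:ℤ)^(2*q') := by linarith
  -- final assembly
  rw [hb]
  have hX2 : (n:ℤ)^(q+1)*((n.choose q:ℤ)-(j.choose q:ℤ))
      - (((n:ℤ)+1)^(q+1) - (n:ℤ)^(q+1))*((n.choose (q+1):ℤ)-(j.choose (q+1):ℤ))
      ≥ -(2^(q+1) * (((n:ℤ) - j) * (n:ℤ)^(2*q))) := by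
    have h1 : 0 ≤ (n:ℤ)^(q+1)*((n.choose q:ℤ)-(j.choose q:ℤ)) := mul_nonneg (hpow _) hdiffq
    linarith
  have hX2' : (n:ℤ)^(q+1)*((n.choose q:ℤ)-(j.choose q:ℤ))
      - (((n:ℤ)+1)^(q+1) - (n:ℤ)^(q+1))*((n.choose (q+1):ℤ)-(j.choose (q+1):ℤ))
      ≤ ((n:ℤ) - j) * (n:ℤ)^(2*q) := by
    have h2 : 0 ≤ (((n:ℤ)+1)^(q+1) - (n:ℤ)^(q+1))*((n.choose (q+1):ℤ)-(j.choose (q+1):ℤ)) :=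
      mul_nonneg hD0 hdiffp
    linarith
  have habs := abs_sub
    ((n:ℤ)^(q+1)*(n.choose q : ℤ) - (((n:ℤ)+1)^(q+1) - (n:ℤ)^(q+1))*(n.choose (q+1):ℤ))
    ((n:ℤ)^(q+1)*((n.choose q:ℤ)-(j.choose q:ℤ))
      - (((n:ℤ)+1)^(q+1) - (n:ℤ)^(q+1))*((n.choose (q+1):ℤ)-(j.choose (q+1):ℤ)))
  have habs2 : |(n:ℤ)^(q+1)*((n.choose q:ℤ)-(j.choose q:ℤ))
      - (((n:ℤ)+1)^(q+1) - (n:ℤ)^(q+1))*((n.choose (q+1):ℤ)-(j.choose (q+1):ℤ))|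
      ≤ (1 + 2^(q+1)) * (((n:ℤ) - j) * (n:ℤ)^(2*q)) := by
    rw [abs_le]
    constructor
    · have h0 : 0 ≤ ((n:ℤ) - j) * (n:ℤ)^(2*q) := mul_nonneg hK (hpow _)
      nlinarith [hX2]
    · have h0 : 0 ≤ 2^(q+1) * (((n:ℤ) - j) * (n:ℤ)^(2*q)) := by positivity
      linarith [hX2']
  have hfin : (0:ℤ) ≤ (n:ℤ)^(2*q) := hpow _
  have h2p : (0:ℤ) ≤ 2^(q+1) := by positivity
  have hpow2 : (2:ℤ)^(q+2) = 2*2^(q+1) := by ring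
  have hq0 : (0:ℤ) ≤ (q:ℤ) := Int.natCast_nonneg _
  calc |((n:ℤ)^(q+1)*(n.choose q : ℤ) - (((n:ℤ)+1)^(q+1) - (n:ℤ)^(q+1))*(n.choose (q+1):ℤ))
        - ((n:ℤ)^(q+1)*((n.choose q:ℤ)-(j.choose q:ℤ))
            - (((n:ℤ)+1)^(q+1) - (n:ℤ)^(q+1))*((n.choose (q+1):ℤ)-(j.choose (q+1):ℤ)))|
      ≤ ((q:ℤ) + 2^(q+1)) * (n:ℤ)^(2*q) + (1 + 2^(q+1)) * (((n:ℤ) - j) * (n:ℤ)^(2*q)) := by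
        refine le_trans (habs) (add_le_add t3 habs2)
    _ ≤ ((q:ℤ) + 1 + 2^(q+2)) * (n:ℤ)^(2*q) * ((n:ℤ) - (j:ℤ) + 1) := by
        rw [hpow2]
        nlinarith [mul_nonneg hK hfin, mul_nonneg (mul_nonneg h2p hK) hfin,
          mul_nonneg hq0 (mul_nonneg hK hfin)]
lemma keyR (p n j : ℕ) (hj : p ≤ j) (hjn : j ≤ n) :
    |(n:ℝ)^p * (((j+1).choose p : ℕ) : ℝ) - ((n:ℝ)+1)^p * ((j.choose p : ℕ) : ℝ)|
      ≤ (if p = 0 then 0 else (p:ℝ) + 2^(p+1)) * (n:ℝ)^(2*p-2) * ((n:ℝ) - (j:ℝ) + 1) := by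
  rcases p with _ | q
  · simp
  · rw [if_neg (Nat.succ_ne_zero q)]
    have h := keyZ q n j hj hjn
    have h2 : 2*(q+1)-2 = 2*q := by omega
    rw [h2]
    have hc := (@Int.cast_le ℝ _ _ _).mpr h
    push_cast at hc ⊢
    convert hc using 2 <;> push_cast <;> ring

set_option maxHeartbeats 1000000 in
theorem stmt7 {K : Type*} [Nonempty K] (g : K → K) (u : K → ℂ)
    (hu : ∃ B : ℝ, ∀ x, ‖u x‖ ≤ B)
    (lam : ℝ) (hlam : 1 < lam) (η : ℂ) (hη : ‖η‖ = lam)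
    (m : ℕ) (hm : 1 ≤ m)
    (v : ℕ → K → ℂ)
    (hv : ∀ n, m - 1 ≤ n → ∀ x, v n x =
      ((n : ℂ) ^ (m - 1) * (lam : ℂ) ^ n)⁻¹ *
        ∑ j ∈ Finset.Icc (m - 1) n,
          (j.choose (m - 1) : ℂ) * η ^ (j + 1 - m) * u (g^[n - j] x)) :
    ∃ C : ℝ, 0 < C ∧ ∀ n : ℕ, m ≤ n → ∀ x,
      ‖v (n + 1) x - (η / (lam : ℂ)) * v n x‖ ≤ C / (n : ℝ) ^ 2 := by
  obtain ⟨x₀⟩ := (inferInstance : Nonempty K)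
  obtain ⟨B, hB⟩ := hu
  have hB0 : 0 ≤ B := le_trans (norm_nonneg _) (hB x₀)
  obtain ⟨p, rfl⟩ : ∃ p, m = p + 1 := ⟨m - 1, by omega⟩
  simp only [Nat.add_sub_cancel, Nat.add_sub_add_right] at hv
  have hlam0 : (0:ℝ) < lam := by linarith
  -- growth constant c₀ with k^2 ≤ c₀ * lam^k
  obtain ⟨c₀', hc₀'⟩ := (tendsto_pow_const_div_const_pow_of_one_lt 2 hlam).bddAbove_range
  set c₀ : ℝ := max c₀' 1 with hc₀def
  have hc₀1 : (1:ℝ) ≤ c₀ := le_max_right _ _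
  have hc₀pos : (0:ℝ) < c₀ := by linarith
  have hc₀ : ∀ k : ℕ, (k:ℝ)^2 ≤ c₀ * lam^k := by
    intro k
    have h1 : (k:ℝ)^2 / lam^k ≤ c₀' := hc₀' ⟨k, rfl⟩
    have h2 : (0:ℝ) < lam^k := pow_pos hlam0 k
    have h3 : (k:ℝ)^2 / lam^k ≤ c₀ := le_trans h1 (le_max_left _ _)
    calc (k:ℝ)^2 = ((k:ℝ)^2/lam^k) * lam^k := by field_simp
      _ ≤ c₀ * lam^k := mul_le_mul_of_nonneg_right h3 h2.le
  -- geometric series constant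
  have hr0 : (0:ℝ) ≤ lam⁻¹ := inv_nonneg.mpr hlam0.le
  have hr1 : lam⁻¹ < 1 := inv_lt_one_of_one_lt₀ hlam
  have hsum : Summable (fun k : ℕ => ((k:ℝ)+1) * (lam⁻¹)^k) := by
    have h1 : Summable (fun k : ℕ => (k:ℝ)^1 * (lam⁻¹)^k) :=
      summable_pow_mul_geometric_of_norm_lt_one 1
        (by rw [Real.norm_eq_abs, abs_of_nonneg hr0]; exact hr1)
    have h2 : Summable (fun k : ℕ => (lam⁻¹)^k) := summable_geometric_of_lt_one hr0 hr1
    have := h1.add h2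
    simpa [pow_one, add_mul, one_mul] using this
  set G : ℝ := ∑' k : ℕ, ((k:ℝ)+1) * (lam⁻¹)^k with hGdef
  have hG0 : (0:ℝ) ≤ G :=
    tsum_nonneg (fun k => mul_nonneg (by positivity) (pow_nonneg hr0 _))
  have hGsum : ∀ s : Finset ℕ, ∑ k ∈ s, ((k:ℝ)+1)*(lam⁻¹)^k ≤ G :=
    fun s => Summable.sum_le_tsum s (fun i _ => mul_nonneg (by positivity) (pow_nonneg hr0 _)) hsum
  set A : ℝ := if p = 0 then 0 else (p:ℝ) + 2^(p+1) with hAdef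
  have hA0 : 0 ≤ A := by rw [hAdef]; split <;> positivity
  have hBC0 : 0 ≤ B * c₀ := mul_nonneg hB0 hc₀pos.le
  have hBAG0 : 0 ≤ B * A * G := mul_nonneg (mul_nonneg hB0 hA0) hG0
  refine ⟨B * c₀ + B * A * G + 1, by linarith, ?_⟩
  intro n hn x
  have hn1 : 1 ≤ n := le_trans (by omega) hn
  have hpn : p ≤ n := by omega
  have hnR : (0:ℝ) < (n:ℝ) := by exact_mod_cast hn1
  have hv1 := hv (n+1) (by omega) x
  have hv0 := hv n (by omega) x
  -- nonzero facts in ℂ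
  have hnC : ((n:ℂ))^p ≠ 0 := pow_ne_zero _ (by exact_mod_cast hnR.ne')
  have hn1C : ((n:ℂ)+1)^p ≠ 0 := pow_ne_zero _ (by
    intro h
    have h2 : (((n:ℝ)+1 : ℝ) : ℂ) = 0 := by push_cast at h ⊢; exact_mod_cast h
    rw [Complex.ofReal_eq_zero] at h2
    linarith)
  have hlamC : (lam:ℂ) ≠ 0 := by
    simp only [ne_eq, Complex.ofReal_eq_zero]
    linarith
  have hLnC : (lam:ℂ)^n ≠ 0 := pow_ne_zero _ hlamC
  -- step identity for the sum
  have hstep : ∑ j ∈ Finset.Icc p (n+1), (j.choose p : ℂ) * η^(j-p) * u (g^[n+1-j] x)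
      = u (g^[n+1-p] x)
        + ∑ j ∈ Finset.Icc p n, (((j+1).choose p : ℕ) : ℂ) * η^(j+1-p) * u (g^[n-j] x) := by
    have hins : Finset.Icc p (n+1) = insert p (Finset.Icc (p+1) (n+1)) := by
      ext a
      simp only [Finset.mem_Icc, Finset.mem_insert]
      omega
    rw [hins, Finset.sum_insert (by simp only [Finset.mem_Icc]; omega)]
    congr 1
    · simp [Nat.choose_self]
    · rw [← Finset.map_add_right_Icc p n 1, Finset.sum_map]
      refine Finset.sum_congr rfl fun j hj => ?_
      simp only [Finset.mem_Icc] at hj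
      simp only [addRightEmbedding_apply]
      rw [show n + 1 - (j + 1) = n - j from by omega]
  -- abstract algebraic identity
  have habc : ∀ (a b Ln S₁ S₀ : ℂ), a ≠ 0 → b ≠ 0 → Ln ≠ 0 →
      (b*(Ln*(lam:ℂ)))⁻¹ * S₁ - η/(lam:ℂ) * ((a*Ln)⁻¹ * S₀)
        = (a*b*(Ln*(lam:ℂ)))⁻¹ * (a*S₁ - b*(η*S₀)) := by
    intro a b Ln S₁ S₀ ha hb hLn
    field_simp
  -- main identity
  have hD : v (n+1) x - (η/(lam:ℂ)) * v n x
      = (((n:ℂ))^p * ((n:ℂ)+1)^p * ((lam:ℂ)^n*(lam:ℂ)))⁻¹ *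
        (((n:ℂ))^p * u (g^[n+1-p] x)
          + ∑ j ∈ Finset.Icc p n,
              (((n:ℂ))^p * (((j+1).choose p : ℕ) : ℂ) - ((n:ℂ)+1)^p * ((j.choose p : ℕ) : ℂ))
                * η^(j+1-p) * u (g^[n-j] x)) := by
    have e2 : ∑ j ∈ Finset.Icc p n,
          (((n:ℂ))^p * (((j+1).choose p : ℕ) : ℂ) - ((n:ℂ)+1)^p * ((j.choose p : ℕ) : ℂ))
            * η^(j+1-p) * u (g^[n-j] x)
        = ((n:ℂ))^p * (∑ j ∈ Finset.Icc p n, (((j+1).choose p : ℕ):ℂ) * η^(j+1-p) * u (g^[n-j] x))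
          - ((n:ℂ)+1)^p * (η * ∑ j ∈ Finset.Icc p n, (j.choose p:ℂ) * η^(j-p) * u (g^[n-j] x)) := by
      rw [Finset.mul_sum, Finset.mul_sum, Finset.mul_sum, ← Finset.sum_sub_distrib]
      refine Finset.sum_congr rfl fun j hj => ?_
      have hjp : p ≤ j := (Finset.mem_Icc.mp hj).1
      rw [show j + 1 - p = (j - p) + 1 from by omega, pow_succ]
      ring
    have e1 : (((n+1:ℕ)):ℂ) = ((n:ℂ)+1) := by push_cast; ring
    rw [hv1, hv0, hstep, e1, pow_succ (lam:ℂ) n]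
    rw [habc ((n:ℂ)^p) (((n:ℂ)+1)^p) ((lam:ℂ)^n) _ _ hnC hn1C hLnC]
    congr 1
    rw [e2]
    ring
  rw [hD, norm_mul]
  have hdenpos : (0:ℝ) < (n:ℝ)^p * ((n:ℝ)+1)^p * lam^(n+1) :=
    mul_pos (mul_pos (pow_pos hnR _) (pow_pos (by linarith) _)) (pow_pos hlam0 _)
  have hninv : ‖(((n:ℂ))^p * ((n:ℂ)+1)^p * ((lam:ℂ)^n*(lam:ℂ)))⁻¹‖
      = ((n:ℝ)^p * ((n:ℝ)+1)^p * lam^(n+1))⁻¹ := by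
    rw [show ((n:ℂ))^p * ((n:ℂ)+1)^p * ((lam:ℂ)^n*(lam:ℂ))
        = ((((n:ℝ)^p * ((n:ℝ)+1)^p * lam^(n+1) : ℝ)) : ℂ) from by
      rw [pow_succ]; push_cast; ring]
    rw [norm_inv, Complex.norm_real, Real.norm_eq_abs, abs_of_pos hdenpos]
  rw [hninv]
  -- bound the numerator
  have hTb : ‖((n:ℂ))^p * u (g^[n+1-p] x)
        + ∑ j ∈ Finset.Icc p n,
            (((n:ℂ))^p * (((j+1).choose p : ℕ) : ℂ) - ((n:ℂ)+1)^p * ((j.choose p : ℕ) : ℂ))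
              * η^(j+1-p) * u (g^[n-j] x)‖
      ≤ (n:ℝ)^p * B + B * A * (n:ℝ)^(2*p-2) * (lam^(n+1-p) * G) := by
    refine le_trans (norm_add_le _ _) (add_le_add ?_ ?_)
    · rw [norm_mul, norm_pow, Complex.norm_natCast]
      exact mul_le_mul_of_nonneg_left (hB _) (by positivity)
    · refine le_trans (norm_sum_le _ _) ?_
      have hper : ∀ j ∈ Finset.Icc p n,
          ‖(((n:ℂ))^p * (((j+1).choose p : ℕ) : ℂ) - ((n:ℂ)+1)^p * ((j.choose p : ℕ) : ℂ))
              * η^(j+1-p) * u (g^[n-j] x)‖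
          ≤ (B * A * (n:ℝ)^(2*p-2) * lam^(n+1-p)) * (((n:ℝ)-(j:ℝ)+1) * (lam⁻¹)^(n-j)) := by
        intro j hj
        obtain ⟨hj1, hj2⟩ := Finset.mem_Icc.mp hj
        have hjR : (j:ℝ) ≤ (n:ℝ) := by exact_mod_cast hj2
        rw [norm_mul, norm_mul, norm_pow, hη]
        have hb : ‖((n:ℂ))^p * (((j+1).choose p : ℕ) : ℂ) - ((n:ℂ)+1)^p * ((j.choose p : ℕ) : ℂ)‖
            = |(n:ℝ)^p * (((j+1).choose p : ℕ) : ℝ) - ((n:ℝ)+1)^p * ((j.choose p : ℕ) : ℝ)| := by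
          rw [show ((n:ℂ))^p * (((j+1).choose p : ℕ) : ℂ) - ((n:ℂ)+1)^p * ((j.choose p : ℕ) : ℂ)
              = (((((n:ℝ)^p * (((j+1).choose p : ℕ) : ℝ)
                  - ((n:ℝ)+1)^p * ((j.choose p : ℕ) : ℝ)) : ℝ)) : ℂ) from by push_cast; ring]
          exact Complex.norm_real _
        rw [hb]
        have hkey := keyR p n j hj1 hj2
        rw [← hAdef] at hkey
        have hlampow : lam^(j+1-p) = lam^(n+1-p) * (lam⁻¹)^(n-j) := by
          rw [inv_pow]
          rw [eq_comm, mul_inv_eq_iff_eq_mul₀ (pow_ne_zero _ hlam0.ne'), ← pow_add,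
            show j+1-p + (n-j) = n+1-p from by omega]
        calc |(n:ℝ)^p * (((j+1).choose p : ℕ) : ℝ) - ((n:ℝ)+1)^p * ((j.choose p : ℕ) : ℝ)|
              * lam^(j+1-p) * ‖u (g^[n-j] x)‖
            ≤ (A * (n:ℝ)^(2*p-2) * ((n:ℝ)-(j:ℝ)+1)) * lam^(j+1-p) * B := by
              apply mul_le_mul _ (hB _) (norm_nonneg _)
              · apply mul_nonneg (mul_nonneg (mul_nonneg hA0 (by positivity)) (by linarith))
                  (pow_nonneg hlam0.le _)
              · exact mul_le_mul_of_nonneg_right hkey (pow_nonneg hlam0.le _)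
          _ = (B * A * (n:ℝ)^(2*p-2) * lam^(n+1-p)) * (((n:ℝ)-(j:ℝ)+1) * (lam⁻¹)^(n-j)) := by
              rw [hlampow]; ring
      calc ∑ j ∈ Finset.Icc p n,
            ‖(((n:ℂ))^p * (((j+1).choose p : ℕ) : ℂ) - ((n:ℂ)+1)^p * ((j.choose p : ℕ) : ℂ))
                * η^(j+1-p) * u (g^[n-j] x)‖
          ≤ ∑ j ∈ Finset.Icc p n,
              (B * A * (n:ℝ)^(2*p-2) * lam^(n+1-p)) * (((n:ℝ)-(j:ℝ)+1) * (lam⁻¹)^(n-j)) :=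
            Finset.sum_le_sum hper
        _ = (B * A * (n:ℝ)^(2*p-2) * lam^(n+1-p))
            * ∑ j ∈ Finset.Icc p n, ((n:ℝ)-(j:ℝ)+1) * (lam⁻¹)^(n-j) := by
            rw [Finset.mul_sum]
        _ ≤ (B * A * (n:ℝ)^(2*p-2) * lam^(n+1-p)) * G := by
            apply mul_le_mul_of_nonneg_left _
              (mul_nonneg (mul_nonneg (mul_nonneg hB0 hA0) (by positivity))
                (pow_nonneg hlam0.le _))
            have hre : ∑ j ∈ Finset.Icc p n, ((n:ℝ)-(j:ℝ)+1) * (lam⁻¹)^(n-j)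
                = ∑ k ∈ Finset.range (n+1-p), ((k:ℝ)+1) * (lam⁻¹)^k := by
              refine Finset.sum_nbij' (fun j => n - j) (fun k => n - k) ?_ ?_ ?_ ?_ ?_
              · intro a ha
                simp only [Finset.mem_Icc] at ha
                simp only [Finset.mem_range]
                omega
              · intro a ha
                simp only [Finset.mem_range] at ha
                simp only [Finset.mem_Icc]
                omega
              · intro a ha
                simp only [Finset.mem_Icc] at ha
                omega
              · intro a ha
                simp only [Finset.mem_range] at ha
                omega
              · intro a ha
                simp only [Finset.mem_Icc] at ha
                congr 1
                rw [Nat.cast_sub ha.2]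
            rw [hre]
            exact hGsum _
        _ = B * A * (n:ℝ)^(2*p-2) * (lam^(n+1-p) * G) := by ring
  -- final division argument
  have hfin : ((n:ℝ)^p * ((n:ℝ)+1)^p * lam^(n+1))⁻¹
        * ((n:ℝ)^p * B + B * A * (n:ℝ)^(2*p-2) * (lam^(n+1-p) * G))
      ≤ (B * c₀ + B * A * G) / (n:ℝ)^2 := by
    rw [mul_comm, ← div_eq_mul_inv, div_le_div_iff₀ hdenpos (pow_pos hnR 2)]
    have g1 : (n:ℝ)^p * B * (n:ℝ)^2 ≤ B * c₀ * ((n:ℝ)^p * ((n:ℝ)+1)^p * lam^(n+1)) := by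
      have k1 : (n:ℝ)^2 ≤ c₀ * lam^(n+1) := by
        have h := hc₀ (n+1)
        have h2 : (n:ℝ)^2 ≤ ((n+1:ℕ):ℝ)^2 := by
          push_cast
          nlinarith [hnR.le]
        linarith
      have k4 : (1:ℝ) ≤ ((n:ℝ)+1)^p := one_le_pow₀ (by linarith)
      calc (n:ℝ)^p * B * (n:ℝ)^2 = B * ((n:ℝ)^p * (n:ℝ)^2) := by ring
        _ ≤ B * ((n:ℝ)^p * (c₀ * lam^(n+1))) := by
            apply mul_le_mul_of_nonneg_left _ hB0
            exact mul_le_mul_of_nonneg_left k1 (by positivity)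
        _ = B * c₀ * ((n:ℝ)^p * 1 * lam^(n+1)) := by ring
        _ ≤ B * c₀ * ((n:ℝ)^p * ((n:ℝ)+1)^p * lam^(n+1)) := by
            apply mul_le_mul_of_nonneg_left _ hBC0
            apply mul_le_mul_of_nonneg_right _ (pow_nonneg hlam0.le _)
            exact mul_le_mul_of_nonneg_left k4 (by positivity)
    have g2 : B * A * (n:ℝ)^(2*p-2) * (lam^(n+1-p) * G) * (n:ℝ)^2
        ≤ B * A * G * ((n:ℝ)^p * ((n:ℝ)+1)^p * lam^(n+1)) := by
      rcases Nat.eq_zero_or_pos p with rfl | hp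
      · rw [hAdef, if_pos rfl]
        simp
      · have k2 : (n:ℝ)^(2*p-2) * (n:ℝ)^2 ≤ (n:ℝ)^p * ((n:ℝ)+1)^p := by
          have e : (n:ℝ)^(2*p-2) * (n:ℝ)^2 = (n:ℝ)^p * (n:ℝ)^p := by
            rw [← pow_add, ← pow_add]
            congr 1
            omega
          rw [e]
          apply mul_le_mul_of_nonneg_left _ (by positivity)
          exact pow_le_pow_left₀ hnR.le (by linarith) p
        have k3 : lam^(n+1-p) ≤ lam^(n+1) := pow_le_pow_right₀ hlam.le (by omega)
        calc B * A * (n:ℝ)^(2*p-2) * (lam^(n+1-p) * G) * (n:ℝ)^2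
            = (B * A * G) * (((n:ℝ)^(2*p-2) * (n:ℝ)^2) * lam^(n+1-p)) := by ring
          _ ≤ (B * A * G) * (((n:ℝ)^p * ((n:ℝ)+1)^p) * lam^(n+1)) := by
              apply mul_le_mul_of_nonneg_left _ hBAG0
              exact mul_le_mul k2 k3 (pow_nonneg hlam0.le _) (by positivity)
          _ = B * A * G * ((n:ℝ)^p * ((n:ℝ)+1)^p * lam^(n+1)) := by ring
    nlinarith [g1, g2]
  refine le_trans (le_trans (mul_le_mul_of_nonneg_left hTb (inv_nonneg.mpr hdenpos.le)) hfin) ?_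
  rw [div_le_div_iff₀ (pow_pos hnR 2) (pow_pos hnR 2)]
  nlinarith [pow_pos hnR 2]
end

section
/- Let K be a metric space, M > 1 a real number, and g : K → K a map with dist(g(x), g(y)) ≤ M·dist(x, y) for all x, y ∈ K. Let ν > 0 and let u : K → ℂ be bounded and ν-Hölder continuous, i.e. there is c ≥ 0 with |u(x) − u(y)| ≤ c·dist(x, y)^ν for all x, y. Let λ > 1 be real, η ∈ ℂ with |η| = λ, and m ≥ 1 an integer. For j ≥ m−1 set s_j := C(j, m−1)·η^{j−m+1}, and for n ≥ m−1 and x ∈ K define v_n(x) := (1/(n^{m−1}·λ^n))·Σ_{j=m−1}^{n} s_j·u(g^{n−j}(x)). Let v : K → ℂ be the uniform limit of the functions (λ/η)^n·v_n. Then for every ν' > 0 with ν' ≤ ν and ν' < log λ / log M, the function v is ν'-Hölder continuous, i.e. there is c' ≥ 0 with |v(x) − v(y)| ≤ c'·dist(x, y)^{ν'} for all x, y ∈ K. -/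
theorem stmt8 {K : Type*} [MetricSpace K] [Nonempty K]
    (M : ℝ) (hM : 1 < M) (g : K → K)
    (hg : ∀ x y : K, dist (g x) (g y) ≤ M * dist x y)
    (ν : ℝ) (hν : 0 < ν) (u : K → ℂ)
    (hu_bdd : ∃ B : ℝ, ∀ x, ‖u x‖ ≤ B)
    (hu_hold : ∃ c : ℝ, 0 ≤ c ∧ ∀ x y : K, ‖u x - u y‖ ≤ c * dist x y ^ ν)
    (lam : ℝ) (hlam : 1 < lam) (η : ℂ) (hη : ‖η‖ = lam)
    (m : ℕ) (hm : 1 ≤ m)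
    (v : ℕ → K → ℂ)
    (hv : ∀ n, m - 1 ≤ n → ∀ x, v n x =
      ((n : ℂ) ^ (m - 1) * (lam : ℂ) ^ n)⁻¹ *
        ∑ j ∈ Finset.Icc (m - 1) n,
          (j.choose (m - 1) : ℂ) * η ^ (j + 1 - m) * u (g^[n - j] x))
    (vlim : K → ℂ)
    (hvlim : TendstoUniformly (fun n x => ((lam : ℂ) / η) ^ n * v n x) vlim
      Filter.atTop) :
    ∀ ν' : ℝ, 0 < ν' → ν' ≤ ν → ν' < Real.log lam / Real.log M →
      ∃ c' : ℝ, 0 ≤ c' ∧ ∀ x y : K, ‖vlim x - vlim y‖ ≤ c' * dist x y ^ ν' := by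
  obtain ⟨B, hB⟩ := hu_bdd
  obtain ⟨c, hc0, hc⟩ := hu_hold
  intro ν' hν'0 hν'ν hν'log
  have hM0 : (0:ℝ) < M := lt_trans one_pos hM
  have hlam0 : (0:ℝ) < lam := lt_trans one_pos hlam
  set r : ℝ := M ^ ν' / lam with hr_def
  have hMν'pos : 0 < M ^ ν' := Real.rpow_pos_of_pos hM0 ν'
  have hr0 : 0 < r := div_pos hMν'pos hlam0
  have hr1 : r < 1 := by
    rw [hr_def, div_lt_one hlam0]
    have hlogM : 0 < Real.log M := Real.log_pos hM
    have hlt : ν' * Real.log M < Real.log lam := (lt_div_iff₀ hlogM).mp hν'log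
    calc M ^ ν' = Real.exp (ν' * Real.log M) := by
          rw [← Real.log_rpow hM0, Real.exp_log hMν'pos]
      _ < Real.exp (Real.log lam) := Real.exp_lt_exp.mpr hlt
      _ = lam := Real.exp_log hlam0
  set c₂ : ℝ := max c (2 * max B 0) with hc₂def
  have hc₂0 : 0 ≤ c₂ := le_trans hc0 (le_max_left _ _)
  -- u is ν'-Hölder with constant c₂
  have hu2 : ∀ a b : K, ‖u a - u b‖ ≤ c₂ * dist a b ^ ν' := by
    intro a b
    rcases le_or_gt (dist a b) 1 with h | h
    · rcases eq_or_lt_of_le (dist_nonneg (x := a) (y := b)) with h0 | h0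
      · have hab : a = b := dist_eq_zero.mp h0.symm
        subst hab
        simp [Real.zero_rpow (ne_of_gt hν'0)]
      · calc ‖u a - u b‖ ≤ c * dist a b ^ ν := hc a b
          _ ≤ c * dist a b ^ ν' :=
            mul_le_mul_of_nonneg_left
              (Real.rpow_le_rpow_of_exponent_ge h0 h hν'ν) hc0
          _ ≤ c₂ * dist a b ^ ν' :=
            mul_le_mul_of_nonneg_right (le_max_left _ _)
              (Real.rpow_nonneg dist_nonneg _)
    · have h1 : (1:ℝ) ≤ dist a b ^ ν' := Real.one_le_rpow h.le hν'0.le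
      have hBB : B ≤ max B 0 := le_max_left _ _
      calc ‖u a - u b‖ ≤ ‖u a‖ + ‖u b‖ := norm_sub_le _ _
        _ ≤ B + B := add_le_add (hB a) (hB b)
        _ ≤ 2 * max B 0 := by linarith
        _ ≤ c₂ := le_max_right _ _
        _ = c₂ * 1 := (mul_one _).symm
        _ ≤ c₂ * dist a b ^ ν' := mul_le_mul_of_nonneg_left h1 hc₂0
  -- iterates of g expand distances by at most M^i
  have hgit : ∀ (i : ℕ) (a b : K), dist (g^[i] a) (g^[i] b) ≤ M ^ i * dist a b := by
    intro i
    induction i with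
    | zero => intro a b; simp
    | succ i ih =>
      intro a b
      rw [Function.iterate_succ_apply', Function.iterate_succ_apply']
      calc dist (g (g^[i] a)) (g (g^[i] b)) ≤ M * dist (g^[i] a) (g^[i] b) := hg _ _
        _ ≤ M * (M ^ i * dist a b) :=
          mul_le_mul_of_nonneg_left (ih a b) hM0.le
        _ = M ^ (i + 1) * dist a b := by ring
  refine ⟨c₂ * (1 - r)⁻¹, mul_nonneg hc₂0 (inv_nonneg.mpr (by linarith)), ?_⟩
  intro x y
  set d : ℝ := dist x y with hd_def
  have hd0 : 0 ≤ d := dist_nonneg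
  have hdν'0 : 0 ≤ d ^ ν' := Real.rpow_nonneg hd0 _
  -- key uniform bound on ‖v n x - v n y‖
  have key : ∀ n, m - 1 ≤ n → ‖v n x - v n y‖ ≤ c₂ * (1 - r)⁻¹ * d ^ ν' := by
    intro n hn
    have hnpow : (0:ℝ) < (n : ℝ) ^ (m - 1) := by
      rcases Nat.eq_zero_or_pos n with h0 | h0
      · subst h0
        have : m - 1 = 0 := Nat.le_zero.mp hn
        simp [this]
      · exact pow_pos (by exact_mod_cast h0) _
    set A : ℝ := (n : ℝ) ^ (m - 1) * lam ^ n with hA_def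
    have hApos : 0 < A := mul_pos hnpow (pow_pos hlam0 n)
    have hAnorm : ‖((n : ℂ) ^ (m - 1) * (lam : ℂ) ^ n)⁻¹‖ = A⁻¹ := by
      rw [norm_inv, norm_mul, norm_pow, norm_pow, Complex.norm_natCast,
        Complex.norm_real, Real.norm_eq_abs, abs_of_pos hlam0]
    rw [hv n hn x, hv n hn y, ← mul_sub, norm_mul, hAnorm, ← Finset.sum_sub_distrib]
    -- bound each term of the sum
    have hterm : ∀ j ∈ Finset.Icc (m - 1) n,
        ‖(j.choose (m - 1) : ℂ) * η ^ (j + 1 - m) * u (g^[n - j] x)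
          - (j.choose (m - 1) : ℂ) * η ^ (j + 1 - m) * u (g^[n - j] y)‖
          ≤ A * r ^ (n - j) * (c₂ * d ^ ν') := by
      intro j hj
      rw [Finset.mem_Icc] at hj
      obtain ⟨hj1, hj2⟩ := hj
      rw [← mul_sub, norm_mul, norm_mul, norm_pow, hη, Complex.norm_natCast]
      have hdist : dist (g^[n - j] x) (g^[n - j] y) ≤ M ^ (n - j) * d := hgit _ _ _
      have hpow_eq : ((M : ℝ) ^ (n - j)) ^ ν' = (M ^ ν') ^ (n - j) := by
        rw [← Real.rpow_natCast M (n - j), ← Real.rpow_mul hM0.le, mul_comm,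
          Real.rpow_mul hM0.le, Real.rpow_natCast]
      have hu_bound : ‖u (g^[n - j] x) - u (g^[n - j] y)‖
          ≤ c₂ * ((M ^ ν') ^ (n - j) * d ^ ν') := by
        calc ‖u (g^[n - j] x) - u (g^[n - j] y)‖
            ≤ c₂ * dist (g^[n - j] x) (g^[n - j] y) ^ ν' := hu2 _ _
          _ ≤ c₂ * (M ^ (n - j) * d) ^ ν' :=
            mul_le_mul_of_nonneg_left
              (Real.rpow_le_rpow dist_nonneg hdist hν'0.le) hc₂0
          _ = c₂ * ((M ^ ν') ^ (n - j) * d ^ ν') := by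
            rw [Real.mul_rpow (pow_nonneg hM0.le _) hd0, hpow_eq]
      have hcoef : (j.choose (m - 1) : ℝ) * lam ^ (j + 1 - m) * (M ^ ν') ^ (n - j)
          ≤ A * r ^ (n - j) := by
        have hchoose : (j.choose (m - 1) : ℝ) ≤ (n : ℝ) ^ (m - 1) := by
          have h1 : j.choose (m - 1) ≤ n.choose (m - 1) :=
            Nat.choose_le_choose _ hj2
          have h2 : n.choose (m - 1) ≤ n ^ (m - 1) := Nat.choose_le_pow _ _
          exact_mod_cast le_trans h1 h2
        have hsplit : lam ^ n = lam ^ (j + 1 - m) * lam ^ (m - 1) * lam ^ (n - j) := by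
          rw [← pow_add, ← pow_add]
          congr 1
          omega
        have hAr : A * r ^ (n - j)
            = (n : ℝ) ^ (m - 1) * lam ^ (m - 1)
              * (lam ^ (j + 1 - m) * (M ^ ν') ^ (n - j)) := by
          rw [hA_def, hr_def, div_pow, hsplit]
          field_simp
        rw [hAr]
        have hlam1 : (1:ℝ) ≤ lam ^ (m - 1) := one_le_pow₀ hlam.le
        have hMnn : (0:ℝ) ≤ (M ^ ν') ^ (n - j) := pow_nonneg hMν'pos.le _
        have hlamnn : (0:ℝ) ≤ lam ^ (j + 1 - m) := (pow_pos hlam0 _).le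
        calc (j.choose (m - 1) : ℝ) * lam ^ (j + 1 - m) * (M ^ ν') ^ (n - j)
            ≤ (n : ℝ) ^ (m - 1) * lam ^ (j + 1 - m) * (M ^ ν') ^ (n - j) := by
              apply mul_le_mul_of_nonneg_right _ hMnn
              exact mul_le_mul_of_nonneg_right hchoose hlamnn
          _ ≤ (n : ℝ) ^ (m - 1) * lam ^ (m - 1)
              * (lam ^ (j + 1 - m) * (M ^ ν') ^ (n - j)) := by
              nlinarith [mul_nonneg hlamnn hMnn, hnpow.le,
                mul_nonneg (mul_nonneg hnpow.le hlamnn) hMnn]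
      calc (j.choose (m - 1) : ℝ) * lam ^ (j + 1 - m)
            * ‖u (g^[n - j] x) - u (g^[n - j] y)‖
          ≤ (j.choose (m - 1) : ℝ) * lam ^ (j + 1 - m)
            * (c₂ * ((M ^ ν') ^ (n - j) * d ^ ν')) := by
            apply mul_le_mul_of_nonneg_left hu_bound
            positivity
        _ = (j.choose (m - 1) : ℝ) * lam ^ (j + 1 - m) * (M ^ ν') ^ (n - j)
            * (c₂ * d ^ ν') := by ring
        _ ≤ A * r ^ (n - j) * (c₂ * d ^ ν') :=
            mul_le_mul_of_nonneg_right hcoef (mul_nonneg hc₂0 hdν'0)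
    have hsum : ‖∑ j ∈ Finset.Icc (m - 1) n,
        ((j.choose (m - 1) : ℂ) * η ^ (j + 1 - m) * u (g^[n - j] x)
          - (j.choose (m - 1) : ℂ) * η ^ (j + 1 - m) * u (g^[n - j] y))‖
        ≤ ∑ j ∈ Finset.Icc (m - 1) n, A * r ^ (n - j) * (c₂ * d ^ ν') :=
      norm_sum_le_of_le _ hterm
    have hgeom : ∑ j ∈ Finset.Icc (m - 1) n, r ^ (n - j) ≤ (1 - r)⁻¹ := by
      have hsub : Finset.Icc (m - 1) n ⊆ Finset.range (n + 1) := by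
        intro j hj
        rw [Finset.mem_Icc] at hj
        rw [Finset.mem_range]
        omega
      have h1 : ∑ j ∈ Finset.Icc (m - 1) n, r ^ (n - j)
          ≤ ∑ j ∈ Finset.range (n + 1), r ^ (n - j) :=
        Finset.sum_le_sum_of_subset_of_nonneg hsub
          (fun j _ _ => pow_nonneg hr0.le _)
      have h2 : ∑ j ∈ Finset.range (n + 1), r ^ (n - j)
          = ∑ j ∈ Finset.range (n + 1), r ^ j := by
        rw [← Finset.sum_range_reflect]
        apply Finset.sum_congr rfl
        intro j hj
        rw [Finset.mem_range] at hj
        congr 1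
        omega
      have h3 : ∑ j ∈ Finset.range (n + 1), r ^ j ≤ ∑' i : ℕ, r ^ i :=
        Summable.sum_le_tsum _ (fun i _ => pow_nonneg hr0.le _)
          (summable_geometric_of_lt_one hr0.le hr1)
      rw [tsum_geometric_of_lt_one hr0.le hr1] at h3
      linarith
    calc A⁻¹ * ‖∑ j ∈ Finset.Icc (m - 1) n,
          ((j.choose (m - 1) : ℂ) * η ^ (j + 1 - m) * u (g^[n - j] x)
            - (j.choose (m - 1) : ℂ) * η ^ (j + 1 - m) * u (g^[n - j] y))‖
        ≤ A⁻¹ * ∑ j ∈ Finset.Icc (m - 1) n, A * r ^ (n - j) * (c₂ * d ^ ν') :=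
          mul_le_mul_of_nonneg_left hsum (inv_nonneg.mpr hApos.le)
      _ = (∑ j ∈ Finset.Icc (m - 1) n, r ^ (n - j)) * (c₂ * d ^ ν') := by
          rw [Finset.mul_sum, Finset.sum_mul]
          apply Finset.sum_congr rfl
          intro j _
          field_simp
      _ ≤ (1 - r)⁻¹ * (c₂ * d ^ ν') :=
          mul_le_mul_of_nonneg_right hgeom (mul_nonneg hc₂0 hdν'0)
      _ = c₂ * (1 - r)⁻¹ * d ^ ν' := by ring
  -- pass to the limit
  have h1 : Filter.Tendsto
      (fun n => ((lam : ℂ) / η) ^ n * v n x - ((lam : ℂ) / η) ^ n * v n y)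
      Filter.atTop (nhds (vlim x - vlim y)) :=
    (hvlim.tendsto_at x).sub (hvlim.tendsto_at y)
  have h2 := h1.norm
  refine le_of_tendsto h2 ?_
  filter_upwards [Filter.eventually_ge_atTop (m - 1)] with n hn
  have hηnorm : ‖(lam : ℂ) / η‖ = 1 := by
    rw [norm_div, hη, Complex.norm_real, Real.norm_eq_abs, abs_of_pos hlam0,
      div_self (ne_of_gt hlam0)]
  rw [← mul_sub, norm_mul, norm_pow, hηnorm, one_pow, one_mul]
  exact key n hn
end

section
/- Let K be a nonempty set, g : K → K a map, and u : K → ℂ a bounded function. Let λ > 1 be real, η ∈ ℂ with |η| = λ, and m ≥ 1 an integer. For j ≥ m−1 set s_j := C(j, m−1)·η^{j−m+1}, and for n ≥ m−1 and x ∈ K define v_n(x) := (1/(n^{m−1}·λ^n))·Σ_{j=m−1}^{n} s_j·u(g^{n−j}(x)), and for N ≥ m define w_N := (1/N)·Σ_{n=m−1}^{N} v_n. Then there exist a bounded function w : K → ℂ and a constant C > 0 such that sup_{x∈K} |w_N(x) − w(x)| ≤ C·(log N)/N for every integer N ≥ 2; moreover w = 0 if η ≠ λ, and w equals the uniform limit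 v of the sequence ((λ/η)^n v_n) if η = λ. -/
set_option maxHeartbeats 1000000

open Finset

lemma aux_geom_sum_le {r : ℝ} (h0 : 0 ≤ r) (h1 : r < 1) (Kn : ℕ) :
    ∑ k ∈ range Kn, r ^ k ≤ (1 - r)⁻¹ := by
  have hne : r ≠ 1 := ne_of_lt h1
  rw [geom_sum_eq hne Kn]
  have hp : (0:ℝ) ≤ r ^ Kn := pow_nonneg h0 _
  have hr1 : (0:ℝ) < 1 - r := by linarith
  have he : (r ^ Kn - 1)/(r-1) = (1 - r^Kn)/(1-r) := by
    rw [div_eq_div_iff (by linarith) (by linarith)]; ring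
  rw [he, ← one_div]
  exact div_le_div₀ zero_le_one (by linarith) hr1 le_rfl

lemma aux_k_pow_le {s : ℝ} (h0 : 0 < s) (h1 : s < 1) (k : ℕ) :
    (k : ℝ) * s ^ k ≤ s / (1 - s) := by
  have hs1 : (0:ℝ) < 1 - s := by linarith
  have hb : 1 + (k : ℝ) * (1/s - 1) ≤ (1 + (1/s - 1)) ^ k := by
    apply one_add_mul_le_pow
    have : 0 < 1/s := by positivity
    linarith
  have heq : 1 + (1/s - 1) = 1/s := by ring
  rw [heq] at hb
  have h2 : (k : ℝ) * ((1 - s)/s) ≤ (1/s) ^ k := by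
    calc (k : ℝ) * ((1 - s)/s) = (k:ℝ) * (1/s - 1) := by
          field_simp
    _ ≤ 1 + (k:ℝ) * (1/s - 1) := by linarith
    _ ≤ (1/s)^k := hb
  have hsk : (0:ℝ) < s ^ k := pow_pos h0 k
  have h3 : (1/s)^k * s^k = 1 := by
    rw [div_pow, one_pow, div_mul_cancel₀]
    exact ne_of_gt hsk
  rw [le_div_iff₀ hs1]
  have := mul_le_mul_of_nonneg_right h2 (le_of_lt hsk)
  rw [h3] at this
  calc (k:ℝ) * s^k * (1-s) = ((k:ℝ) * ((1-s)/s) * s^k) * s := by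
        field_simp
  _ ≤ 1 * s := by
        apply mul_le_mul_of_nonneg_right this (le_of_lt h0)
  _ = s := one_mul s

lemma aux_sum_linear_geom {r : ℝ} (h0 : 0 < r) (h1 : r < 1) (m : ℕ) (Kn : ℕ) :
    ∑ k ∈ range Kn, ((k : ℝ) + m) * r ^ k ≤
      ((m : ℝ) + Real.sqrt r / (1 - Real.sqrt r)) * (1 - Real.sqrt r)⁻¹ := by
  set s := Real.sqrt r with hs
  have hs0 : 0 < s := Real.sqrt_pos.mpr h0
  have hs1 : s < 1 := by
    rw [hs, show (1:ℝ) = Real.sqrt 1 by simp]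
    exact Real.sqrt_lt_sqrt (le_of_lt h0) h1
  have hrs : r = s * s := (Real.mul_self_sqrt (le_of_lt h0)).symm
  have hterm : ∀ k ∈ range Kn, ((k : ℝ) + m) * r ^ k ≤ ((m : ℝ) + s / (1 - s)) * s ^ k := by
    intro k _
    have h2 : r ^ k = s ^ k * s ^ k := by rw [hrs, mul_pow]
    rw [h2, ← mul_assoc]
    apply mul_le_mul_of_nonneg_right _ (le_of_lt (pow_pos hs0 k))
    have hks : (k:ℝ) * s ^ k ≤ s / (1 - s) := aux_k_pow_le hs0 hs1 k
    have hms : (m:ℝ) * s ^ k ≤ m := by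
      calc (m:ℝ) * s ^ k ≤ (m:ℝ) * 1 := by
            apply mul_le_mul_of_nonneg_left _ (Nat.cast_nonneg m)
            exact pow_le_one₀ (le_of_lt hs0) (le_of_lt hs1)
      _ = m := mul_one _
    calc ((k : ℝ) + m) * s ^ k = (k:ℝ) * s^k + (m:ℝ) * s^k := by ring
    _ ≤ s / (1-s) + m := add_le_add hks hms
    _ = (m:ℝ) + s / (1-s) := by ring
  calc ∑ k ∈ range Kn, ((k : ℝ) + m) * r ^ k ≤ ∑ k ∈ range Kn, ((m : ℝ) + s / (1 - s)) * s ^ k :=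
        Finset.sum_le_sum hterm
  _ = ((m : ℝ) + s / (1 - s)) * ∑ k ∈ range Kn, s ^ k := by rw [Finset.mul_sum]
  _ ≤ ((m : ℝ) + s / (1 - s)) * (1 - s)⁻¹ := by
        apply mul_le_mul_of_nonneg_left (aux_geom_sum_le (le_of_lt hs0) hs1 Kn)
        have : 0 ≤ s / (1 - s) := div_nonneg (le_of_lt hs0) (by linarith)
        have : (0:ℝ) ≤ m := Nat.cast_nonneg m
        linarith

lemma aux_harmonic (N : ℕ) : ∑ n ∈ Finset.Icc 1 N, (n : ℝ)⁻¹ ≤ 1 + Real.log N := by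
  have h := harmonic_le_one_add_log N
  rw [harmonic_eq_sum_Icc] at h
  push_cast at h
  exact h

lemma aux_binom_real {F P D a nn pp : ℝ} (hF1 : 1 ≤ F) (hP0 : 0 < P) (hub : D ≤ P)
    (hbern : P * (1 - pp * (a / nn)) ≤ D) (hnn : 0 < nn) :
    |D / (F * P) - F⁻¹| ≤ pp * a / nn := by
  have hF0 : (0:ℝ) < F := lt_of_lt_of_le one_pos hF1
  have hLHS : D / (F * P) - F⁻¹ = (D - P) / (F * P) := by field_simp
  have hnonpos : (D - P) / (F * P) ≤ 0 :=
    div_nonpos_of_nonpos_of_nonneg (by linarith) (by positivity)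
  rw [hLHS, abs_of_nonpos hnonpos]
  have hstep1 : (P - D) / (F * P) ≤ (P - D) / P := by
    apply div_le_div_of_nonneg_left (by linarith) hP0
    nlinarith
  have hstep2 : (P - D) / P ≤ pp * a / nn := by
    rw [div_le_iff₀ hP0]
    calc P - D ≤ P * (pp * (a / nn)) := by nlinarith
    _ = pp * a / nn * P := by ring
  calc -((D - P)/(F*P)) = (P - D)/(F*P) := by ring
  _ ≤ (P - D)/P := hstep1
  _ ≤ pp * a / nn := hstep2

lemma aux_binom {p n k : ℕ} (h : k + p ≤ n) (hn : 1 ≤ n) :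
    |((n - k).choose p : ℝ) / (n : ℝ) ^ p - ((Nat.factorial p : ℝ))⁻¹| ≤
      (p : ℝ) * ((k : ℝ) + p) / n := by
  have hnR : (0:ℝ) < n := by exact_mod_cast hn
  have ha0 : (0:ℝ) ≤ (k : ℝ) + p := by positivity
  have han : (k:ℝ) + p ≤ n := by exact_mod_cast (by exact_mod_cast h : ((k + p : ℕ) : ℝ) ≤ n)
  have hF1 : (1:ℝ) ≤ (Nat.factorial p : ℝ) := by
    exact_mod_cast Nat.one_le_iff_ne_zero.mpr (Nat.factorial_ne_zero p)
  have hP0 : (0:ℝ) < (n:ℝ) ^ p := pow_pos hnR p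
  have hub : (Nat.factorial p : ℝ) * ((n - k).choose p : ℝ) ≤ (n:ℝ) ^ p := by
    have h1 : Nat.factorial p * (n - k).choose p ≤ n ^ p := by
      calc Nat.factorial p * (n - k).choose p = (n - k).descFactorial p :=
            (Nat.descFactorial_eq_factorial_mul_choose _ _).symm
      _ ≤ (n - k) ^ p := Nat.descFactorial_le_pow _ _
      _ ≤ n ^ p := Nat.pow_le_pow_left (Nat.sub_le _ _) _
    exact_mod_cast h1
  have hlbN : (n - (k + p)) ^ p ≤ Nat.factorial p * (n - k).choose p := by
    rw [← Nat.descFactorial_eq_factorial_mul_choose, Nat.descFactorial_eq_prod_range]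
    calc (n - (k+p)) ^ p = ∏ _i ∈ Finset.range p, (n - (k+p)) := by
          rw [Finset.prod_const, Finset.card_range]
    _ ≤ ∏ i ∈ Finset.range p, (n - k - i) := by
          apply Finset.prod_le_prod'
          intro i hi
          rw [Finset.mem_range] at hi
          omega
  have hlb : ((n:ℝ) - ((k:ℝ) + p)) ^ p ≤ (Nat.factorial p : ℝ) * ((n - k).choose p : ℝ) := by
    have hcast : ((n - (k+p) : ℕ) : ℝ) = (n:ℝ) - ((k:ℝ) + p) := by
      rw [Nat.cast_sub h]; push_cast; ring
    rw [← hcast]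
    exact_mod_cast hlbN
  have hbern : (n:ℝ)^p * (1 - (p:ℝ) * (((k:ℝ)+p) / n)) ≤
      (Nat.factorial p : ℝ) * ((n - k).choose p : ℝ) := by
    have hb : 1 + (p:ℝ) * (-(((k:ℝ)+p)/n)) ≤ (1 + (-(((k:ℝ)+p)/n))) ^ p := by
      apply one_add_mul_le_pow
      have : ((k:ℝ)+p) / n ≤ 1 := by rw [div_le_one hnR]; exact han
      linarith
    have heq : ((n:ℝ) - ((k:ℝ)+p)) ^ p = (n:ℝ)^p * (1 + (-(((k:ℝ)+p)/n))) ^ p := by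
      rw [← mul_pow]
      congr 1
      field_simp
      ring
    calc (n:ℝ)^p * (1 - (p:ℝ) * (((k:ℝ)+p)/n))
        = (n:ℝ)^p * (1 + (p:ℝ) * (-(((k:ℝ)+p)/n))) := by ring
    _ ≤ (n:ℝ)^p * (1 + (-(((k:ℝ)+p)/n)))^p :=
          mul_le_mul_of_nonneg_left hb (le_of_lt hP0)
    _ = ((n:ℝ) - ((k:ℝ)+p)) ^ p := heq.symm
    _ ≤ _ := hlb
  have hchoose : ((n - k).choose p : ℝ) / (n:ℝ)^p =
      ((Nat.factorial p : ℝ) * ((n - k).choose p : ℝ)) / ((Nat.factorial p : ℝ) * (n:ℝ)^p) := by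
    rw [mul_div_mul_left]
    exact ne_of_gt (lt_of_lt_of_le one_pos hF1)
  rw [hchoose]
  exact aux_binom_real hF1 hP0 hub hbern hnR

lemma aux_final {A C1 : ℝ} (hA : 0 ≤ A) (hC1 : 0 ≤ C1) {N : ℕ} (hN : 2 ≤ N) :
    (A + C1 * (1 + Real.log N)) / N ≤ ((A + C1) / Real.log 2 + C1 + 1) * Real.log N / N := by
  have hN0 : (0:ℝ) < N := by positivity
  have hlog2 : 0 < Real.log 2 := Real.log_pos one_lt_two
  have hlogN : Real.log 2 ≤ Real.log N :=
    Real.log_le_log (by norm_num) (by exact_mod_cast hN)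
  have hlogN0 : 0 ≤ Real.log N := le_trans (le_of_lt hlog2) hlogN
  apply (div_le_div_iff_of_pos_right hN0).mpr
  have key : A + C1 ≤ ((A + C1) / Real.log 2) * Real.log N := by
    rw [div_mul_eq_mul_div, le_div_iff₀ hlog2]
    nlinarith
  nlinarith

theorem stmt9 {K : Type*} [Nonempty K] (g : K → K) (u : K → ℂ)
    (hu : ∃ B : ℝ, ∀ x, ‖u x‖ ≤ B)
    (lam : ℝ) (hlam : 1 < lam) (η : ℂ) (hη : ‖η‖ = lam)
    (m : ℕ) (hm : 1 ≤ m)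
    (v : ℕ → K → ℂ)
    (hv : ∀ n, m - 1 ≤ n → ∀ x, v n x =
      ((n : ℂ) ^ (m - 1) * (lam : ℂ) ^ n)⁻¹ *
        ∑ j ∈ Finset.Icc (m - 1) n,
          (j.choose (m - 1) : ℂ) * η ^ (j + 1 - m) * u (g^[n - j] x))
    (w : ℕ → K → ℂ)
    (hw : ∀ N, m ≤ N → ∀ x, w N x = (N : ℂ)⁻¹ * ∑ n ∈ Finset.Icc (m - 1) N, v n x) :
    ∃ wlim : K → ℂ, (∃ B' : ℝ, ∀ x, ‖wlim x‖ ≤ B') ∧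
      (∃ C : ℝ, 0 < C ∧ ∀ N : ℕ, 2 ≤ N → m ≤ N → ∀ x,
        ‖w N x - wlim x‖ ≤ C * Real.log N / N) ∧
      (η ≠ (lam : ℂ) → wlim = 0) ∧
      (η = (lam : ℂ) →
        TendstoUniformly (fun n x => ((lam : ℂ) / η) ^ n * v n x) wlim Filter.atTop) := by
  obtain ⟨B0, hB0⟩ := hu
  set p : ℕ := m - 1 with hpdef
  have hmp : m = p + 1 := by omega
  have hlam0 : (0:ℝ) < lam := lt_trans one_pos hlam
  have hη0 : η ≠ 0 := by
    intro h; rw [h, norm_zero] at hη; exact absurd hη.symm (ne_of_gt hlam0)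
  have hlamC : (lam:ℂ) ≠ 0 := by
    simpa using ne_of_gt hlam0
  set r : ℝ := lam⁻¹ with hrdef
  have hr0 : 0 < r := inv_pos.mpr hlam0
  have hr1 : r < 1 := by
    rw [hrdef, inv_lt_one_iff₀]; right; exact hlam
  have hinvnorm : ‖η⁻¹‖ = r := by rw [norm_inv, hη]
  set B : ℝ := max B0 0 with hBdef
  have hB : ∀ x, ‖u x‖ ≤ B := fun x => le_trans (hB0 x) (le_max_left _ _)
  have hBnn : 0 ≤ B := le_max_right _ _
  set c : ℕ → K → ℂ := fun k x =>
    ((Nat.factorial p : ℂ))⁻¹ * (η⁻¹) ^ (k + p) * u (g^[k] x) with hcdef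
  have hfac1 : (1:ℝ) ≤ (Nat.factorial p : ℝ) := by
    exact_mod_cast Nat.one_le_iff_ne_zero.mpr (Nat.factorial_ne_zero p)
  have hc_norm : ∀ x k, ‖c k x‖ ≤ B * r ^ k := by
    intro x k
    rw [hcdef]
    have h1 : ‖((Nat.factorial p : ℂ))⁻¹ * (η⁻¹) ^ (k + p) * u (g^[k] x)‖ =
        ‖((Nat.factorial p : ℂ))⁻¹‖ * ‖η⁻¹‖ ^ (k+p) * ‖u (g^[k] x)‖ := by
      rw [norm_mul, norm_mul, norm_pow]
    rw [h1, hinvnorm]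
    have h2 : ‖((Nat.factorial p : ℂ))⁻¹‖ ≤ 1 := by
      rw [norm_inv]
      rw [inv_le_one_iff₀]; right
      have : ‖((Nat.factorial p : ℂ))‖ = (Nat.factorial p : ℝ) := by
        rw [Complex.norm_natCast]
      rw [this]; exact hfac1
    have h3 : r ^ (k+p) ≤ r ^ k := by
      apply pow_le_pow_of_le_one (le_of_lt hr0) (le_of_lt hr1)
      omega
    calc ‖((Nat.factorial p : ℂ))⁻¹‖ * r ^ (k+p) * ‖u (g^[k] x)‖
        ≤ 1 * r ^ k * B := by
          apply mul_le_mul (mul_le_mul h2 h3 (by positivity) zero_le_one) (hB _)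
            (norm_nonneg _) (by positivity)
    _ = B * r ^ k := by ring
  have hsummable : ∀ x, Summable fun k => c k x := by
    intro x
    apply Summable.of_norm_bounded ((summable_geometric_of_lt_one (le_of_lt hr0) hr1).mul_left B)
    exact hc_norm x
  set vhat : K → ℂ := fun x => ∑' k, c k x with hvhatdef
  set Bv : ℝ := B * (1 - r)⁻¹ with hBvdef
  have hBv0 : 0 ≤ Bv := by
    rw [hBvdef]; apply mul_nonneg hBnn; rw [inv_nonneg]; linarith
  have hvhat : ∀ x, ‖vhat x‖ ≤ Bv := by
    intro x
    exact tsum_of_norm_bounded ((hasSum_geometric_of_lt_one (le_of_lt hr0) hr1).mul_left B)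
      (hc_norm x)
  set μ : ℂ := η / lam with hμdef
  have hμnorm : ‖μ‖ = 1 := by
    rw [hμdef, norm_div, hη, Complex.norm_real, Real.norm_eq_abs, abs_of_pos hlam0,
      div_self (ne_of_gt hlam0)]
  -- the key identity
  have hiden : ∀ n, m ≤ n → ∀ x, v n x =
      μ ^ n * ∑ k ∈ Finset.range (n - p + 1),
        ((((n-k).choose p : ℝ) / (n:ℝ)^p : ℝ) : ℂ) * (η⁻¹) ^ (k + p) * u (g^[k] x) := by
    intro n hn x
    rw [hv n (by omega) x, Finset.mul_sum, Finset.mul_sum]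
    have hn1 : 1 ≤ n := le_trans hm hn
    have hreindex : ∀ (F : ℕ → ℂ), ∑ j ∈ Finset.Icc p n, F j =
        ∑ k ∈ Finset.range (n - p + 1), F (n - k) := by
      intro F
      apply Finset.sum_nbij' (i := fun j => n - j) (j := fun k => n - k)
      · intro a ha; simp only [Finset.mem_Icc] at ha; simp only [Finset.mem_range]; omega
      · intro a ha; simp only [Finset.mem_range] at ha; simp only [Finset.mem_Icc]; omega
      · intro a ha; simp only [Finset.mem_Icc] at ha; omega
      · intro a ha; simp only [Finset.mem_range] at ha; omega
      · intro a ha; simp only [Finset.mem_Icc] at ha; congr 1; omega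
    rw [hreindex]
    apply Finset.sum_congr rfl
    intro k hk
    rw [Finset.mem_range] at hk
    have hkp : k + p ≤ n := by omega
    have he1 : n - (n - k) = k := by omega
    have he2 : (n - k) + 1 - m = n - (k + p) := by omega
    rw [he1, he2]
    have hpow : η ^ (k + p) * η ^ (n - (k + p)) = η ^ n := by
      rw [← pow_add]; congr 1; omega
    have hnC : (n:ℂ) ≠ 0 := by exact_mod_cast (by omega : n ≠ 0)
    have hnpC : ((n:ℂ))^p ≠ 0 := pow_ne_zero _ hnC
    have hlamnC : ((lam:ℂ))^n ≠ 0 := pow_ne_zero _ hlamC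
    have hcast : ((((n-k).choose p : ℝ) / (n:ℝ)^p : ℝ) : ℂ) =
        ((n-k).choose p : ℂ) / ((n:ℂ))^p := by push_cast; ring
    rw [hcast, hμdef, div_pow, inv_pow]
    rw [← hpow]
    field_simp
  -- constants
  set s : ℝ := Real.sqrt r with hsdef
  set M1 : ℝ := ((p:ℝ) + s / (1 - s)) * (1 - s)⁻¹ with hM1def
  set M2 : ℝ := B * lam ^ p * (lam - 1)⁻¹ * (1 - r)⁻¹ with hM2def
  have hs0 : 0 < s := Real.sqrt_pos.mpr hr0
  have hs1 : s < 1 := by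
    rw [hsdef, show (1:ℝ) = Real.sqrt 1 by simp]
    exact Real.sqrt_lt_sqrt (le_of_lt hr0) hr1
  have hM1nn : 0 ≤ M1 := by
    rw [hM1def]
    apply mul_nonneg
    · have : 0 ≤ s / (1 - s) := div_nonneg (le_of_lt hs0) (by linarith)
      positivity
    · rw [inv_nonneg]; linarith
  have hM2nn : 0 ≤ M2 := by
    rw [hM2def]
    apply mul_nonneg
    apply mul_nonneg
    · positivity
    · rw [inv_nonneg]; linarith
    · rw [inv_nonneg]; linarith
  set C1 : ℝ := (p:ℝ) * B * M1 + M2 with hC1def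
  have hC1nn : 0 ≤ C1 := by
    rw [hC1def]; have : (0:ℝ) ≤ (p:ℝ) * B := by positivity
    nlinarith
  -- r^n decay
  have hrn : ∀ n : ℕ, 1 ≤ n → r ^ n ≤ (lam - 1)⁻¹ / n := by
    intro n hn
    have hnR : (0:ℝ) < n := by exact_mod_cast hn
    have hbern : 1 + (n:ℝ) * (lam - 1) ≤ lam ^ n := by
      have := one_add_mul_le_pow (by linarith : (-2:ℝ) ≤ lam - 1) n
      calc 1 + (n:ℝ) * (lam - 1) ≤ (1 + (lam - 1)) ^ n := this
      _ = lam ^ n := by norm_num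
    have hlamn : (n:ℝ) * (lam - 1) ≤ lam ^ n := by nlinarith
    have hlamn0 : (0:ℝ) < lam ^ n := pow_pos hlam0 n
    rw [hrdef, inv_pow, div_eq_mul_inv, ← mul_inv]
    apply inv_anti₀
    · exact mul_pos (by linarith) hnR
    · calc (lam - 1) * n = (n:ℝ) * (lam - 1) := mul_comm _ _
      _ ≤ lam ^ n := by linarith
  -- Claim A
  have hclaimA : ∀ n, m ≤ n → ∀ x, ‖v n x - μ ^ n * vhat x‖ ≤ C1 / n := by
    intro n hn x
    have hn1 : 1 ≤ n := le_trans hm hn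
    have hnR : (0:ℝ) < n := by exact_mod_cast hn1
    set Kn : ℕ := n - p + 1 with hKndef
    rw [hiden n hn x]
    have hsplitv : vhat x = (∑ k ∈ Finset.range Kn, c k x) + ∑' k, c (k + Kn) x :=
      ((hsummable x).sum_add_tsum_nat_add Kn).symm
    have hfactor : μ ^ n * (∑ k ∈ Finset.range Kn,
          ((((n-k).choose p : ℝ) / (n:ℝ)^p : ℝ) : ℂ) * (η⁻¹) ^ (k + p) * u (g^[k] x))
        - μ ^ n * vhat x
        = μ ^ n * ((∑ k ∈ Finset.range Kn,
            (((((n-k).choose p : ℝ) / (n:ℝ)^p : ℝ) : ℂ) * (η⁻¹) ^ (k + p) * u (g^[k] x)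
              - c k x)) - ∑' k, c (k + Kn) x) := by
      rw [hsplitv, Finset.sum_sub_distrib]
      ring
    rw [hfactor, norm_mul, norm_pow, hμnorm, one_pow, one_mul]
    have hbody : ‖∑ k ∈ Finset.range Kn,
        (((((n-k).choose p : ℝ) / (n:ℝ)^p : ℝ) : ℂ) * (η⁻¹) ^ (k + p) * u (g^[k] x)
          - c k x)‖ ≤ (p:ℝ) * B * M1 / n := by
      calc ‖∑ k ∈ Finset.range Kn,
          (((((n-k).choose p : ℝ) / (n:ℝ)^p : ℝ) : ℂ) * (η⁻¹) ^ (k + p) * u (g^[k] x)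
            - c k x)‖
          ≤ ∑ k ∈ Finset.range Kn,
            ‖((((n-k).choose p : ℝ) / (n:ℝ)^p : ℝ) : ℂ) * (η⁻¹) ^ (k + p) * u (g^[k] x)
              - c k x‖ := norm_sum_le _ _
      _ ≤ ∑ k ∈ Finset.range Kn, ((p:ℝ) * B / n) * (((k:ℝ) + p) * r ^ k) := by
          apply Finset.sum_le_sum
          intro k hk
          rw [Finset.mem_range] at hk
          have hkp : k + p ≤ n := by omega
          have hterm : ((((n-k).choose p : ℝ) / (n:ℝ)^p : ℝ) : ℂ) * (η⁻¹) ^ (k + p) * u (g^[k] x)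
              - c k x
              = (((((n-k).choose p : ℝ) / (n:ℝ)^p - ((Nat.factorial p : ℝ))⁻¹ : ℝ)) : ℂ)
                * (η⁻¹) ^ (k + p) * u (g^[k] x) := by
            rw [hcdef]
            push_cast
            ring
          rw [hterm]
          have hnorm : ‖(((((n-k).choose p : ℝ) / (n:ℝ)^p - ((Nat.factorial p : ℝ))⁻¹ : ℝ)) : ℂ)
                * (η⁻¹) ^ (k + p) * u (g^[k] x)‖
              = |((n-k).choose p : ℝ) / (n:ℝ)^p - ((Nat.factorial p : ℝ))⁻¹|
                * r ^ (k + p) * ‖u (g^[k] x)‖ := by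
            rw [norm_mul, norm_mul, norm_pow, hinvnorm, Complex.norm_real, Real.norm_eq_abs]
          rw [hnorm]
          have hbin := aux_binom hkp hn1
          have hr3 : r ^ (k + p) ≤ r ^ k :=
            pow_le_pow_of_le_one (le_of_lt hr0) (le_of_lt hr1) (by omega)
          calc |((n-k).choose p : ℝ) / (n:ℝ)^p - ((Nat.factorial p : ℝ))⁻¹|
                * r ^ (k + p) * ‖u (g^[k] x)‖
              ≤ ((p:ℝ) * ((k:ℝ) + p) / n) * r ^ k * B := by
                apply mul_le_mul _ (hB _) (norm_nonneg _) (by positivity)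
                apply mul_le_mul hbin hr3 (by positivity) (by positivity)
          _ = ((p:ℝ) * B / n) * (((k:ℝ) + p) * r ^ k) := by ring
      _ = ((p:ℝ) * B / n) * ∑ k ∈ Finset.range Kn, ((k:ℝ) + p) * r ^ k := by
          rw [Finset.mul_sum]
      _ ≤ ((p:ℝ) * B / n) * M1 := by
          apply mul_le_mul_of_nonneg_left _ (by positivity)
          rw [hM1def, hsdef]
          exact aux_sum_linear_geom hr0 hr1 p Kn
      _ = (p:ℝ) * B * M1 / n := by ring
    have htail : ‖∑' k, c (k + Kn) x‖ ≤ M2 / n := by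
      have h1 : ‖∑' k, c (k + Kn) x‖ ≤ (B * r ^ Kn) * (1 - r)⁻¹ := by
        apply tsum_of_norm_bounded
          ((hasSum_geometric_of_lt_one (le_of_lt hr0) hr1).mul_left (B * r ^ Kn))
        intro k
        calc ‖c (k + Kn) x‖ ≤ B * r ^ (k + Kn) := hc_norm x _
        _ = B * r ^ Kn * r ^ k := by rw [pow_add]; ring
      have h2 : r ^ Kn ≤ r ^ (n - p) :=
        pow_le_pow_of_le_one (le_of_lt hr0) (le_of_lt hr1) (by omega)
      have h3 : r ^ (n - p) = r ^ n * lam ^ p := by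
        have : n - p + p = n := by omega
        have h4 : r ^ (n - p) * r ^ p = r ^ n := by rw [← pow_add, this]
        have h5 : r ^ p * lam ^ p = 1 := by
          rw [hrdef, ← mul_pow, inv_mul_cancel₀ (ne_of_gt hlam0), one_pow]
        calc r ^ (n - p) = r ^ (n - p) * (r ^ p * lam ^ p) := by rw [h5, mul_one]
        _ = (r ^ (n - p) * r ^ p) * lam ^ p := by ring
        _ = r ^ n * lam ^ p := by rw [h4]
      have h6 : r ^ n ≤ (lam - 1)⁻¹ / n := hrn n hn1
      calc ‖∑' k, c (k + Kn) x‖ ≤ (B * r ^ Kn) * (1 - r)⁻¹ := h1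
      _ ≤ (B * (r ^ n * lam ^ p)) * (1 - r)⁻¹ := by
          apply mul_le_mul_of_nonneg_right _ (by rw [inv_nonneg]; linarith)
          apply mul_le_mul_of_nonneg_left _ hBnn
          rw [← h3]; exact h2
      _ ≤ (B * (((lam - 1)⁻¹ / n) * lam ^ p)) * (1 - r)⁻¹ := by
          apply mul_le_mul_of_nonneg_right _ (by rw [inv_nonneg]; linarith)
          apply mul_le_mul_of_nonneg_left _ hBnn
          apply mul_le_mul_of_nonneg_right h6 (by positivity)
      _ = M2 / n := by rw [hM2def]; ring
    calc ‖(∑ k ∈ Finset.range Kn,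
          (((((n-k).choose p : ℝ) / (n:ℝ)^p : ℝ) : ℂ) * (η⁻¹) ^ (k + p) * u (g^[k] x)
            - c k x)) - ∑' k, c (k + Kn) x‖
        ≤ ‖∑ k ∈ Finset.range Kn,
            (((((n-k).choose p : ℝ) / (n:ℝ)^p : ℝ) : ℂ) * (η⁻¹) ^ (k + p) * u (g^[k] x)
              - c k x)‖ + ‖∑' k, c (k + Kn) x‖ := norm_sub_le _ _
    _ ≤ (p:ℝ) * B * M1 / n + M2 / n := add_le_add hbody htail
    _ = C1 / n := by rw [hC1def]; ring
  -- bound on first term n = p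
  have hvp : ∀ x, ‖v p x - μ ^ p * vhat x‖ ≤ B + Bv := by
    intro x
    have hvpx : v p x = ((p:ℂ) ^ p * (lam:ℂ) ^ p)⁻¹ * u x := by
      rw [hv p le_rfl x, Finset.Icc_self, Finset.sum_singleton, Nat.choose_self,
        Nat.sub_self, Function.iterate_zero_apply]
      have : p + 1 - m = 0 := by omega
      rw [this, pow_zero]
      push_cast
      ring
    have h1 : ‖v p x‖ ≤ B := by
      rw [hvpx, norm_mul]
      have hnormP : ‖((p:ℂ) ^ p * (lam:ℂ) ^ p)⁻¹‖ ≤ 1 := by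
        rw [norm_inv, inv_le_one_iff₀]; right
        rw [norm_mul, norm_pow, norm_pow, Complex.norm_natCast, Complex.norm_real,
          Real.norm_eq_abs, abs_of_pos hlam0]
        have hp1 : (1:ℝ) ≤ (p:ℝ) ^ p := by
          rcases Nat.eq_zero_or_pos p with h | h
          · simp [h]
          · apply one_le_pow₀
            exact_mod_cast h
        have hl1 : (1:ℝ) ≤ lam ^ p := one_le_pow₀ (le_of_lt hlam)
        nlinarith
      calc ‖((p:ℂ) ^ p * (lam:ℂ) ^ p)⁻¹‖ * ‖u x‖ ≤ 1 * B :=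
            mul_le_mul hnormP (hB x) (norm_nonneg _) zero_le_one
      _ = B := one_mul B
    have h2 : ‖μ ^ p * vhat x‖ ≤ Bv := by
      rw [norm_mul, norm_pow, hμnorm, one_pow, one_mul]
      exact hvhat x
    calc ‖v p x - μ ^ p * vhat x‖ ≤ ‖v p x‖ + ‖μ ^ p * vhat x‖ := norm_sub_le _ _
    _ ≤ B + Bv := add_le_add h1 h2
  -- Cesàro error bound
  have hE : ∀ N, m ≤ N → ∀ x,
      ‖∑ n ∈ Finset.Icc p N, (v n x - μ ^ n * vhat x)‖ ≤
        (B + Bv) + C1 * (1 + Real.log N) := by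
    intro N hN x
    have hIcc : Finset.Icc p N = insert p (Finset.Icc m N) := by
      ext j
      simp only [Finset.mem_Icc, Finset.mem_insert]
      omega
    have hpnotin : p ∉ Finset.Icc m N := by
      simp only [Finset.mem_Icc]; omega
    rw [hIcc, Finset.sum_insert hpnotin]
    have htailsum : ‖∑ n ∈ Finset.Icc m N, (v n x - μ ^ n * vhat x)‖ ≤
        C1 * (1 + Real.log N) := by
      calc ‖∑ n ∈ Finset.Icc m N, (v n x - μ ^ n * vhat x)‖
          ≤ ∑ n ∈ Finset.Icc m N, ‖v n x - μ ^ n * vhat x‖ := norm_sum_le _ _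
      _ ≤ ∑ n ∈ Finset.Icc m N, C1 / n := by
          apply Finset.sum_le_sum
          intro n hn
          rw [Finset.mem_Icc] at hn
          exact hclaimA n hn.1 x
      _ = C1 * ∑ n ∈ Finset.Icc m N, (n:ℝ)⁻¹ := by
          rw [Finset.mul_sum]
          apply Finset.sum_congr rfl
          intro n _
          rw [div_eq_mul_inv]
      _ ≤ C1 * ∑ n ∈ Finset.Icc 1 N, (n:ℝ)⁻¹ := by
          apply mul_le_mul_of_nonneg_left _ hC1nn
          apply Finset.sum_le_sum_of_subset_of_nonneg
          · intro j hj
            rw [Finset.mem_Icc] at hj ⊢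
            omega
          · intro j _ _
            positivity
      _ ≤ C1 * (1 + Real.log N) := by
          apply mul_le_mul_of_nonneg_left (aux_harmonic N) hC1nn
    calc ‖(v p x - μ ^ p * vhat x) + ∑ n ∈ Finset.Icc m N, (v n x - μ ^ n * vhat x)‖
        ≤ ‖v p x - μ ^ p * vhat x‖ + ‖∑ n ∈ Finset.Icc m N, (v n x - μ ^ n * vhat x)‖ :=
          norm_add_le _ _
    _ ≤ (B + Bv) + C1 * (1 + Real.log N) := add_le_add (hvp x) htailsum
  -- splitting of the Cesàro sum
  have hsplit : ∀ N x, ∑ n ∈ Finset.Icc p N, v n x =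
      (∑ n ∈ Finset.Icc p N, (v n x - μ ^ n * vhat x)) +
        (∑ n ∈ Finset.Icc p N, μ ^ n) * vhat x := by
    intro N x
    rw [Finset.sum_mul, ← Finset.sum_add_distrib]
    apply Finset.sum_congr rfl
    intro n _
    ring
  by_cases hcase : η = (lam : ℂ)
  · -- η = λ : limit is vhat
    have hμ1 : μ = 1 := by rw [hμdef, hcase, div_self hlamC]
    set A : ℝ := (B + Bv) + (m:ℝ) * Bv with hAdef
    have hA0 : 0 ≤ A := by
      rw [hAdef]; positivity
    refine ⟨vhat, ⟨Bv, hvhat⟩, ⟨(A + C1) / Real.log 2 + C1 + 1, ?_, ?_⟩, ?_, ?_⟩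
    · have hlog2 : 0 < Real.log 2 := Real.log_pos one_lt_two
      have : 0 ≤ (A + C1) / Real.log 2 := by positivity
      linarith
    · intro N hN2 hNm x
      have hNR : (0:ℝ) < N := by positivity
      have hNC : (N:ℂ) ≠ 0 := by exact_mod_cast (by omega : N ≠ 0)
      have hcard : ∑ n ∈ Finset.Icc p N, μ ^ n = ((N + 1 - p : ℕ) : ℂ) := by
        rw [hμ1]
        simp [Nat.card_Icc]
      have hkey : w N x - vhat x =
          (N:ℂ)⁻¹ * (∑ n ∈ Finset.Icc p N, (v n x - μ ^ n * vhat x)) +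
            (((N + 1 - p : ℕ) : ℂ) - (N:ℂ)) / N * vhat x := by
        rw [hw N hNm x, hsplit N x, hcard]
        generalize (∑ n ∈ Finset.Icc p N, (v n x - μ ^ n * vhat x)) = S
        field_simp
        ring
      have hdiffnorm : ‖((N + 1 - p : ℕ) : ℂ) - (N:ℂ)‖ ≤ (m:ℝ) := by
        have hc1 : ((N + 1 - p : ℕ) : ℂ) - (N:ℂ) = (((1:ℝ) - (p:ℝ) : ℝ) : ℂ) := by
          have : ((N + 1 - p : ℕ) : ℂ) = (N:ℂ) + 1 - (p:ℂ) := by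
            have hple : p ≤ N + 1 := by omega
            push_cast [Nat.cast_sub hple]
            ring
          rw [this]
          push_cast
          ring
        rw [hc1, Complex.norm_real, Real.norm_eq_abs]
        have hp0 : (0:ℝ) ≤ (p:ℝ) := Nat.cast_nonneg p
        have hmR : (m:ℝ) = (p:ℝ) + 1 := by rw [hmp]; push_cast; ring
        rw [abs_le]
        constructor <;> [linarith; linarith]
      have hnorm1 : ‖(N:ℂ)⁻¹ * (∑ n ∈ Finset.Icc p N, (v n x - μ ^ n * vhat x))‖ ≤
          ((B + Bv) + C1 * (1 + Real.log N)) / N := by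
        rw [norm_mul, norm_inv, Complex.norm_natCast, div_eq_inv_mul]
        apply mul_le_mul_of_nonneg_left (hE N hNm x) (by positivity)
      have hnorm2 : ‖(((N + 1 - p : ℕ) : ℂ) - (N:ℂ)) / N * vhat x‖ ≤ (m:ℝ) * Bv / N := by
        rw [norm_mul, norm_div, Complex.norm_natCast]
        calc ‖((N + 1 - p : ℕ) : ℂ) - (N:ℂ)‖ / (N:ℝ) * ‖vhat x‖
            ≤ (m:ℝ) / N * Bv := by
              apply mul_le_mul _ (hvhat x) (norm_nonneg _) (by positivity)
              exact (div_le_div_iff_of_pos_right hNR).mpr hdiffnorm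
        _ = (m:ℝ) * Bv / N := by ring
      calc ‖w N x - vhat x‖
          ≤ ‖(N:ℂ)⁻¹ * (∑ n ∈ Finset.Icc p N, (v n x - μ ^ n * vhat x))‖ +
            ‖(((N + 1 - p : ℕ) : ℂ) - (N:ℂ)) / N * vhat x‖ := by
            rw [hkey]; exact norm_add_le _ _
      _ ≤ ((B + Bv) + C1 * (1 + Real.log N)) / N + (m:ℝ) * Bv / N :=
            add_le_add hnorm1 hnorm2
      _ = (A + C1 * (1 + Real.log N)) / N := by rw [hAdef]; ring
      _ ≤ ((A + C1) / Real.log 2 + C1 + 1) * Real.log N / N := aux_final hA0 hC1nn hN2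
    · intro hne; exact absurd hcase hne
    · intro _
      have hdiv : (lam:ℂ) / η = 1 := by rw [hcase, div_self hlamC]
      simp only [hdiv, one_pow, one_mul]
      rw [Metric.tendstoUniformly_iff]
      intro ε hε
      have hN0 : ∃ N0 : ℕ, m ≤ N0 ∧ (C1 / ε : ℝ) < N0 := by
        refine ⟨m + ⌈C1 / ε⌉₊ + 1, by omega, ?_⟩
        have h1 : (C1 / ε : ℝ) ≤ (⌈C1 / ε⌉₊ : ℝ) := Nat.le_ceil _
        have h2 : ((⌈C1 / ε⌉₊ : ℕ) : ℝ) < ((m + ⌈C1 / ε⌉₊ + 1 : ℕ) : ℝ) := by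
          exact_mod_cast (by omega : ⌈C1 / ε⌉₊ < m + ⌈C1 / ε⌉₊ + 1)
        linarith
      obtain ⟨N0, hN0m, hN0lt⟩ := hN0
      filter_upwards [Filter.eventually_ge_atTop N0] with n hn
      intro x
      have hnm : m ≤ n := le_trans hN0m hn
      have hn1 : 1 ≤ n := le_trans hm hnm
      have hnR : (0:ℝ) < n := by exact_mod_cast hn1
      have hclaim := hclaimA n hnm x
      rw [hμ1, one_pow, one_mul] at hclaim
      have hdist : dist (vhat x) (v n x) = ‖v n x - vhat x‖ := by
        rw [dist_eq_norm, norm_sub_rev]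
      rw [hdist]
      have hlt : C1 / n < ε := by
        rw [div_lt_iff₀ hnR]
        have hn0lt : (C1 / ε : ℝ) < n := by
          have : ((N0:ℕ):ℝ) ≤ (n:ℝ) := by exact_mod_cast hn
          linarith
        calc C1 = (C1 / ε) * ε := by field_simp
        _ < (n:ℝ) * ε := mul_lt_mul_of_pos_right hn0lt hε
        _ = ε * n := mul_comm _ _
      exact lt_of_le_of_lt hclaim hlt
  · -- η ≠ λ : limit is 0
    have hμne : μ ≠ 1 := by
      intro h
      apply hcase
      rw [hμdef, div_eq_one_iff_eq hlamC] at h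
      exact h
    have hμm1 : ‖μ - 1‖ ≠ 0 := by
      intro h
      rw [norm_eq_zero, sub_eq_zero] at h
      exact hμne h
    have hμm1pos : 0 < ‖μ - 1‖ := lt_of_le_of_ne (norm_nonneg _) (Ne.symm hμm1)
    set G : ℝ := 4 / ‖μ - 1‖ with hGdef
    have hG0 : 0 ≤ G := by positivity
    have hgeom : ∀ N, m ≤ N → ‖∑ n ∈ Finset.Icc p N, μ ^ n‖ ≤ G := by
      intro N hN
      have hr2 : ∀ tt : ℕ, ‖∑ i ∈ Finset.range tt, μ ^ i‖ ≤ 2 / ‖μ - 1‖ := by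
        intro tt
        rw [geom_sum_eq hμne tt, norm_div]
        apply (div_le_div_iff_of_pos_right hμm1pos).mpr
        calc ‖μ ^ tt - 1‖ ≤ ‖μ ^ tt‖ + ‖(1:ℂ)‖ := norm_sub_le _ _
        _ = 2 := by rw [norm_pow, hμnorm, one_pow, norm_one]; norm_num
      have hIccIco : Finset.Icc p N = Finset.Ico p (N + 1) := by
        rw [Finset.Ico_add_one_right_eq_Icc]
      have hconsec : ∑ i ∈ Finset.Ico 0 p, μ ^ i + ∑ i ∈ Finset.Ico p (N+1), μ ^ i =
          ∑ i ∈ Finset.Ico 0 (N+1), μ ^ i :=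
        Finset.sum_Ico_consecutive _ (Nat.zero_le p) (by omega)
      have heq : ∑ n ∈ Finset.Icc p N, μ ^ n =
          (∑ i ∈ Finset.range (N+1), μ ^ i) - ∑ i ∈ Finset.range p, μ ^ i := by
        rw [hIccIco, Finset.range_eq_Ico, Finset.range_eq_Ico, ← hconsec]
        ring
      rw [heq, hGdef]
      calc ‖(∑ i ∈ Finset.range (N+1), μ ^ i) - ∑ i ∈ Finset.range p, μ ^ i‖
          ≤ ‖∑ i ∈ Finset.range (N+1), μ ^ i‖ + ‖∑ i ∈ Finset.range p, μ ^ i‖ :=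
            norm_sub_le _ _
      _ ≤ 2 / ‖μ - 1‖ + 2 / ‖μ - 1‖ := add_le_add (hr2 _) (hr2 _)
      _ = 4 / ‖μ - 1‖ := by ring
    set A : ℝ := (B + Bv) + G * Bv with hAdef
    have hA0 : 0 ≤ A := by rw [hAdef]; positivity
    refine ⟨0, ⟨0, fun x => by simp⟩, ⟨(A + C1) / Real.log 2 + C1 + 1, ?_, ?_⟩, fun _ => rfl, ?_⟩
    · have hlog2 : 0 < Real.log 2 := Real.log_pos one_lt_two
      have : 0 ≤ (A + C1) / Real.log 2 := by positivity
      linarith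
    · intro N hN2 hNm x
      have hNR : (0:ℝ) < N := by positivity
      have hkey : w N x =
          (N:ℂ)⁻¹ * ((∑ n ∈ Finset.Icc p N, (v n x - μ ^ n * vhat x)) +
            (∑ n ∈ Finset.Icc p N, μ ^ n) * vhat x) := by
        rw [hw N hNm x, hsplit N x]
      simp only [Pi.zero_apply, sub_zero]
      rw [hkey, norm_mul, norm_inv, Complex.norm_natCast]
      have hbound : ‖(∑ n ∈ Finset.Icc p N, (v n x - μ ^ n * vhat x)) +
          (∑ n ∈ Finset.Icc p N, μ ^ n) * vhat x‖ ≤ A + C1 * (1 + Real.log N) := by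
        calc ‖(∑ n ∈ Finset.Icc p N, (v n x - μ ^ n * vhat x)) +
            (∑ n ∈ Finset.Icc p N, μ ^ n) * vhat x‖
            ≤ ‖∑ n ∈ Finset.Icc p N, (v n x - μ ^ n * vhat x)‖ +
              ‖(∑ n ∈ Finset.Icc p N, μ ^ n) * vhat x‖ := norm_add_le _ _
        _ ≤ ((B + Bv) + C1 * (1 + Real.log N)) + G * Bv := by
              apply add_le_add (hE N hNm x)
              rw [norm_mul]
              exact mul_le_mul (hgeom N hNm) (hvhat x) (norm_nonneg _) hG0
        _ = A + C1 * (1 + Real.log N) := by rw [hAdef]; ring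
      calc (N:ℝ)⁻¹ * ‖(∑ n ∈ Finset.Icc p N, (v n x - μ ^ n * vhat x)) +
          (∑ n ∈ Finset.Icc p N, μ ^ n) * vhat x‖
          ≤ (N:ℝ)⁻¹ * (A + C1 * (1 + Real.log N)) :=
            mul_le_mul_of_nonneg_left hbound (by positivity)
      _ = (A + C1 * (1 + Real.log N)) / N := by ring
      _ ≤ ((A + C1) / Real.log 2 + C1 + 1) * Real.log N / N := aux_final hA0 hC1nn hN2
    · intro heq; exact absurd heq hcase
end

section
/- Let K be a metric space, M > 1 a real number, and g : K → K a map with dist(g(x), g(y)) ≤ M·dist(x, y) for all x, y ∈ K. Let ν > 0 and let u : K → ℂ be bounded and ν-Hölder continuous, i.e. there is c ≥ 0 with |u(x) − u(y)| ≤ c·dist(x, y)^ν for all x, y. Set λ := M^ν and h(x) := Σ_{j=0}^{∞} λ^{−j}·u(g^j(x)) (the series converges absolutely since λ > 1). Then there is a constant C > 0 such that |h(x) − h(y)| ≤ C·(1 + |log dist(x, y)|)·dist(x, y)^ν for all x, y ∈ K with 0 < dist(x, y) ≤ 1/2; in particular, h is ν'-Hölder continuous for every ν' with 0 < ν' < ν.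 -/
set_option maxHeartbeats 1600000 in
theorem stmt11 {K : Type*} [MetricSpace K] [Nonempty K]
    (M : ℝ) (hM : 1 < M) (g : K → K)
    (hg : ∀ x y : K, dist (g x) (g y) ≤ M * dist x y)
    (ν : ℝ) (hν : 0 < ν) (u : K → ℂ)
    (hu_bdd : ∃ B : ℝ, ∀ x, ‖u x‖ ≤ B)
    (hu_hold : ∃ c : ℝ, 0 ≤ c ∧ ∀ x y : K, ‖u x - u y‖ ≤ c * dist x y ^ ν)
    (lam : ℝ) (hlam : lam = M ^ ν)
    (h : K → ℂ) (hh : ∀ x, h x = ∑' j : ℕ, ((lam : ℂ) ^ j)⁻¹ * u (g^[j] x)) :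
    (∀ x : K, Summable (fun j : ℕ => ‖((lam : ℂ) ^ j)⁻¹ * u (g^[j] x)‖)) ∧
      (∃ C : ℝ, 0 < C ∧ ∀ x y : K, 0 < dist x y → dist x y ≤ 1 / 2 →
        ‖h x - h y‖ ≤ C * (1 + |Real.log (dist x y)|) * dist x y ^ ν) ∧
      ∀ ν' : ℝ, 0 < ν' → ν' < ν →
        ∃ c' : ℝ, 0 ≤ c' ∧ ∀ x y : K, ‖h x - h y‖ ≤ c' * dist x y ^ ν' := by
  obtain ⟨B, hB⟩ := hu_bdd
  obtain ⟨c, hc0, hc⟩ := hu_hold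
  have hM0 : (0:ℝ) < M := lt_trans one_pos hM
  have hlam1 : 1 < lam := by
    rw [hlam]; exact (Real.one_lt_rpow_iff_of_pos hM0).mpr (Or.inl ⟨hM, hν⟩)
  have hlam0 : (0:ℝ) < lam := lt_trans one_pos hlam1
  have hr1 : lam⁻¹ < 1 := inv_lt_one_of_one_lt₀ hlam1
  have hr0 : (0:ℝ) ≤ lam⁻¹ := by positivity
  have h1r : (0:ℝ) < 1 - lam⁻¹ := by linarith
  have hB0 : 0 ≤ B := le_trans (norm_nonneg _) (hB (Classical.arbitrary K))
  have h2B : 0 ≤ 2 * B * (1 - lam⁻¹)⁻¹ :=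
    mul_nonneg (by linarith) (inv_nonneg.mpr h1r.le)
  have hnorm : ∀ (j : ℕ) (z : ℂ), ‖((lam:ℂ)^j)⁻¹ * z‖ = lam⁻¹ ^ j * ‖z‖ := by
    intro j z
    rw [norm_mul, norm_inv, norm_pow, Complex.norm_real, Real.norm_eq_abs,
      abs_of_pos hlam0, inv_pow]
  have hgeo : Summable fun j : ℕ => lam⁻¹ ^ j := summable_geometric_of_lt_one hr0 hr1
  have hSum : ∀ x : K, Summable (fun j : ℕ => ‖((lam : ℂ) ^ j)⁻¹ * u (g^[j] x)‖) := by
    intro x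
    apply Summable.of_nonneg_of_le (fun j => norm_nonneg _) (fun j => ?_) (hgeo.mul_right B)
    rw [hnorm]
    exact mul_le_mul_of_nonneg_left (hB _) (by positivity)
  have hSumC : ∀ x : K, Summable (fun j : ℕ => ((lam : ℂ) ^ j)⁻¹ * u (g^[j] x)) :=
    fun x => (hSum x).of_norm
  have hiter : ∀ (j : ℕ) (x y : K), dist (g^[j] x) (g^[j] y) ≤ M ^ j * dist x y := by
    intro j
    induction j with
    | zero => intro x y; simp
    | succ n ih =>
      intro x y
      rw [Function.iterate_succ_apply', Function.iterate_succ_apply']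
      calc dist (g (g^[n] x)) (g (g^[n] y)) ≤ M * dist (g^[n] x) (g^[n] y) := hg _ _
        _ ≤ M * (M ^ n * dist x y) := mul_le_mul_of_nonneg_left (ih x y) hM0.le
        _ = M ^ (n+1) * dist x y := by ring
  have hpow : ∀ j : ℕ, (M ^ j : ℝ) ^ ν = lam ^ j := by
    intro j
    rw [hlam, ← Real.rpow_natCast M j, ← Real.rpow_natCast (M ^ ν) j,
      ← Real.rpow_mul hM0.le, ← Real.rpow_mul hM0.le, mul_comm]
  have hterm : ∀ (x y : K) (j : ℕ),
      ‖((lam : ℂ) ^ j)⁻¹ * (u (g^[j] x) - u (g^[j] y))‖ ≤ c * dist x y ^ ν := by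
    intro x y j
    rw [hnorm]
    calc lam⁻¹ ^ j * ‖u (g^[j] x) - u (g^[j] y)‖
        ≤ lam⁻¹ ^ j * (c * dist (g^[j] x) (g^[j] y) ^ ν) :=
          mul_le_mul_of_nonneg_left (hc _ _) (by positivity)
      _ ≤ lam⁻¹ ^ j * (c * (M ^ j * dist x y) ^ ν) := by
          apply mul_le_mul_of_nonneg_left _ (by positivity)
          exact mul_le_mul_of_nonneg_left
            (Real.rpow_le_rpow dist_nonneg (hiter j x y) hν.le) hc0
      _ = (lam⁻¹ ^ j * lam ^ j) * (c * dist x y ^ ν) := by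
          rw [Real.mul_rpow (by positivity) dist_nonneg, hpow j]; ring
      _ = c * dist x y ^ ν := by
          rw [← mul_pow, inv_mul_cancel₀ hlam0.ne', one_pow, one_mul]
  have hterm2 : ∀ (x y : K) (j : ℕ),
      ‖((lam : ℂ) ^ j)⁻¹ * (u (g^[j] x) - u (g^[j] y))‖ ≤ lam⁻¹ ^ j * (2 * B) := by
    intro x y j
    rw [hnorm]
    apply mul_le_mul_of_nonneg_left _ (by positivity)
    calc ‖u (g^[j] x) - u (g^[j] y)‖ ≤ ‖u (g^[j] x)‖ + ‖u (g^[j] y)‖ := norm_sub_le _ _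
      _ ≤ 2 * B := by have := hB (g^[j] x); have := hB (g^[j] y); linarith
  have hFs : ∀ x y : K,
      Summable (fun j : ℕ => ‖((lam : ℂ) ^ j)⁻¹ * (u (g^[j] x) - u (g^[j] y))‖) := by
    intro x y
    exact Summable.of_nonneg_of_le (fun j => norm_nonneg _) (hterm2 x y) (hgeo.mul_right _)
  have hdiff : ∀ x y : K,
      ‖h x - h y‖ ≤ ∑' j : ℕ, ‖((lam : ℂ) ^ j)⁻¹ * (u (g^[j] x) - u (g^[j] y))‖ := by
    intro x y
    have heq : h x - h y = ∑' j : ℕ, ((lam : ℂ) ^ j)⁻¹ * (u (g^[j] x) - u (g^[j] y)) := by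
      rw [hh, hh, ← Summable.tsum_sub (hSumC x) (hSumC y)]
      congr 1; funext j; ring
    rw [heq]
    exact norm_tsum_le_tsum_norm (hFs x y)
  have hlogM : 0 < Real.log M := Real.log_pos hM
  set C : ℝ := (1 + 1 / Real.log M) * c + 2 * B * (1 - lam⁻¹)⁻¹ + 1 with hC
  have hC0 : 0 < C := by
    have h1 : 0 ≤ (1 + 1 / Real.log M) * c := by positivity
    rw [hC]; linarith
  have main : ∀ x y : K, 0 < dist x y → dist x y ≤ 1 / 2 →
      ‖h x - h y‖ ≤ C * (1 + |Real.log (dist x y)|) * dist x y ^ ν := by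
    intro x y hδ0 hδ2
    set δ := dist x y with hδ
    have hδ1 : δ < 1 := by linarith
    have hlogδ : Real.log δ < 0 := Real.log_neg hδ0 hδ1
    have habs : |Real.log δ| = -Real.log δ := abs_of_neg hlogδ
    set q : ℕ := ⌈(-Real.log δ) / Real.log M⌉₊ with hq
    have hq1 : (-Real.log δ) / Real.log M ≤ q := Nat.le_ceil _
    have hq2 : (q : ℝ) < (-Real.log δ) / Real.log M + 1 := by
      exact Nat.ceil_lt_add_one (div_nonneg (by linarith) hlogM.le)
    have hkey : lam⁻¹ ^ q ≤ δ ^ ν := by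
      have h1 : -Real.log δ ≤ q * Real.log M := by
        rw [div_le_iff₀ hlogM] at hq1; linarith
      have h2 : (M ^ q : ℝ)⁻¹ ≤ δ := by
        rw [← Real.exp_log (show (0:ℝ) < (M ^ q : ℝ)⁻¹ by positivity), ← Real.exp_log hδ0]
        apply Real.exp_le_exp.mpr
        rw [Real.log_inv, Real.log_pow]
        linarith
      calc lam⁻¹ ^ q = ((M ^ q : ℝ)⁻¹) ^ ν := by
            rw [inv_pow, ← hpow q, ← Real.inv_rpow (by positivity)]
        _ ≤ δ ^ ν := Real.rpow_le_rpow (by positivity) h2 hν.le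
    have hsplit := Summable.sum_add_tsum_nat_add
      (f := fun j : ℕ => ‖((lam : ℂ) ^ j)⁻¹ * (u (g^[j] x) - u (g^[j] y))‖) q (hFs x y)
    have hhead : ∑ j ∈ Finset.range q, ‖((lam : ℂ) ^ j)⁻¹ * (u (g^[j] x) - u (g^[j] y))‖
        ≤ q * (c * δ ^ ν) := by
      calc ∑ j ∈ Finset.range q, ‖((lam : ℂ) ^ j)⁻¹ * (u (g^[j] x) - u (g^[j] y))‖
          ≤ ∑ _j ∈ Finset.range q, c * δ ^ ν := Finset.sum_le_sum (fun j _ => hterm x y j)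
        _ = q * (c * δ ^ ν) := by rw [Finset.sum_const, Finset.card_range, nsmul_eq_mul]
    have htail : (∑' j : ℕ, ‖((lam : ℂ) ^ (j+q))⁻¹ * (u (g^[j+q] x) - u (g^[j+q] y))‖)
        ≤ lam⁻¹ ^ q * (2 * B) * (1 - lam⁻¹)⁻¹ := by
      have hb : ∀ j : ℕ, ‖((lam : ℂ) ^ (j+q))⁻¹ * (u (g^[j+q] x) - u (g^[j+q] y))‖
          ≤ lam⁻¹ ^ q * (2 * B) * lam⁻¹ ^ j := by
        intro j
        calc ‖((lam : ℂ) ^ (j+q))⁻¹ * (u (g^[j+q] x) - u (g^[j+q] y))‖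
            ≤ lam⁻¹ ^ (j+q) * (2 * B) := hterm2 x y (j+q)
          _ = lam⁻¹ ^ q * (2 * B) * lam⁻¹ ^ j := by rw [pow_add]; ring
      calc (∑' j : ℕ, ‖((lam : ℂ) ^ (j+q))⁻¹ * (u (g^[j+q] x) - u (g^[j+q] y))‖)
          ≤ ∑' j : ℕ, lam⁻¹ ^ q * (2 * B) * lam⁻¹ ^ j :=
            Summable.tsum_le_tsum hb ((summable_nat_add_iff q).mpr (hFs x y)) (hgeo.mul_left _)
        _ = lam⁻¹ ^ q * (2 * B) * (1 - lam⁻¹)⁻¹ := by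
            rw [tsum_mul_left, tsum_geometric_of_lt_one hr0 hr1]
    have hq3 : (q:ℝ) ≤ (1 + |Real.log δ|) * (1 + 1 / Real.log M) := by
      rw [habs]
      have h0 : 0 ≤ -Real.log δ := by linarith
      have h1 : 0 ≤ 1 / Real.log M := by positivity
      have h3 : -Real.log δ / Real.log M = -Real.log δ * (1 / Real.log M) := by ring
      nlinarith [hq2, mul_nonneg h0 h1]
    have hδν : (0:ℝ) ≤ δ ^ ν := Real.rpow_nonneg hδ0.le ν
    calc ‖h x - h y‖
        ≤ ∑' j : ℕ, ‖((lam : ℂ) ^ j)⁻¹ * (u (g^[j] x) - u (g^[j] y))‖ := hdiff x y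
      _ = (∑ j ∈ Finset.range q, ‖((lam : ℂ) ^ j)⁻¹ * (u (g^[j] x) - u (g^[j] y))‖)
          + ∑' j : ℕ, ‖((lam : ℂ) ^ (j+q))⁻¹ * (u (g^[j+q] x) - u (g^[j+q] y))‖ := hsplit.symm
      _ ≤ q * (c * δ ^ ν) + lam⁻¹ ^ q * (2 * B) * (1 - lam⁻¹)⁻¹ := add_le_add hhead htail
      _ ≤ (1 + |Real.log δ|) * (1 + 1 / Real.log M) * (c * δ ^ ν)
          + δ ^ ν * (2 * B) * (1 - lam⁻¹)⁻¹ := by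
          apply add_le_add
          · exact mul_le_mul_of_nonneg_right hq3 (by positivity)
          · exact mul_le_mul_of_nonneg_right
              (mul_le_mul_of_nonneg_right hkey (by linarith)) (inv_nonneg.mpr h1r.le)
      _ ≤ C * (1 + |Real.log δ|) * δ ^ ν := by
          have habs0 : (0:ℝ) ≤ |Real.log δ| := abs_nonneg _
          have t0 : 0 ≤ 2 * B * (1 - lam⁻¹)⁻¹ * (|Real.log δ| * δ ^ ν) :=
            mul_nonneg h2B (mul_nonneg habs0 hδν)
          have t1 : 0 ≤ (1 + |Real.log δ|) * δ ^ ν :=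
            mul_nonneg (by linarith) hδν
          rw [hC]
          nlinarith [t0, t1]
  refine ⟨hSum, ⟨C, hC0, main⟩, ?_⟩
  have hbound : ∀ x : K, ‖h x‖ ≤ B * (1 - lam⁻¹)⁻¹ := by
    intro x
    rw [hh]
    calc ‖∑' j : ℕ, ((lam : ℂ) ^ j)⁻¹ * u (g^[j] x)‖
        ≤ ∑' j : ℕ, ‖((lam : ℂ) ^ j)⁻¹ * u (g^[j] x)‖ := norm_tsum_le_tsum_norm (hSum x)
      _ ≤ ∑' j : ℕ, lam⁻¹ ^ j * B := by
          refine Summable.tsum_le_tsum (fun j => ?_) (hSum x) (hgeo.mul_right B)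
          rw [hnorm]
          exact mul_le_mul_of_nonneg_left (hB _) (by positivity)
      _ = B * (1 - lam⁻¹)⁻¹ := by
          rw [tsum_mul_right, tsum_geometric_of_lt_one hr0 hr1]; ring
  intro ν' hν'0 hν'ν
  set ε := ν - ν' with hε
  have hε0 : 0 < ε := by rw [hε]; linarith
  have hc'1 : (0:ℝ) ≤ C * (1 + 1/ε) := mul_nonneg hC0.le (by positivity)
  refine ⟨max (C * (1 + 1/ε)) (2 * B * (1 - lam⁻¹)⁻¹ * 2 ^ ν'),
    le_max_of_le_left hc'1, ?_⟩
  intro x y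
  rcases eq_or_lt_of_le (dist_nonneg : (0:ℝ) ≤ dist x y) with hd | hd
  · have hxy : x = y := dist_eq_zero.mp hd.symm
    rw [hxy, sub_self, norm_zero]
    exact mul_nonneg (le_max_of_le_left hc'1) (Real.rpow_nonneg dist_nonneg _)
  · rcases le_or_gt (dist x y) (1/2) with hsm | hlg
    · have hmain := main x y hd hsm
      set δ := dist x y with hδ
      have hδ1 : δ < 1 := lt_of_le_of_lt hsm (by norm_num)
      have key2 : (1 + |Real.log δ|) * δ ^ ε ≤ 1 + 1/ε := by
        have hlog : |Real.log δ| = Real.log δ⁻¹ := by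
          rw [Real.log_inv, abs_of_neg (Real.log_neg hd hδ1)]
        have h3 : Real.log δ⁻¹ ≤ (δ⁻¹) ^ ε / ε := Real.log_le_rpow_div (by positivity) hε0
        have h4 : (δ⁻¹) ^ ε * δ ^ ε = 1 := by
          rw [← Real.mul_rpow (by positivity) hd.le, inv_mul_cancel₀ hd.ne', Real.one_rpow]
        have h5 : δ ^ ε ≤ 1 := Real.rpow_le_one hd.le hδ1.le hε0.le
        have h6 : (0:ℝ) ≤ δ ^ ε := Real.rpow_nonneg hd.le ε
        calc (1 + |Real.log δ|) * δ ^ ε = δ ^ ε + Real.log δ⁻¹ * δ ^ ε := by rw [hlog]; ring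
          _ ≤ 1 + ((δ⁻¹) ^ ε / ε) * δ ^ ε :=
              add_le_add h5 (mul_le_mul_of_nonneg_right h3 h6)
          _ = 1 + 1/ε := by rw [div_mul_eq_mul_div, h4]
      calc ‖h x - h y‖ ≤ C * (1 + |Real.log δ|) * δ ^ ν := hmain
        _ = C * ((1 + |Real.log δ|) * δ ^ ε) * δ ^ ν' := by
            rw [show ν = ε + ν' by rw [hε]; ring, Real.rpow_add hd]; ring
        _ ≤ C * (1 + 1/ε) * δ ^ ν' := by
            exact mul_le_mul_of_nonneg_right
              (mul_le_mul_of_nonneg_left key2 hC0.le) (Real.rpow_nonneg hd.le _)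
        _ ≤ max (C * (1 + 1/ε)) (2 * B * (1 - lam⁻¹)⁻¹ * 2 ^ ν') * δ ^ ν' :=
            mul_le_mul_of_nonneg_right (le_max_left _ _) (Real.rpow_nonneg hd.le _)
    · have h1 : ‖h x - h y‖ ≤ 2 * B * (1 - lam⁻¹)⁻¹ := by
        calc ‖h x - h y‖ ≤ ‖h x‖ + ‖h y‖ := norm_sub_le _ _
          _ ≤ 2 * B * (1 - lam⁻¹)⁻¹ := by
              have := hbound x; have := hbound y; linarith
      have h2' : (1:ℝ) ≤ 2 ^ ν' * dist x y ^ ν' := by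
        rw [← Real.mul_rpow (by norm_num) dist_nonneg]
        exact Real.one_le_rpow (by linarith) hν'0.le
      calc ‖h x - h y‖ ≤ 2 * B * (1 - lam⁻¹)⁻¹ := h1
        _ ≤ 2 * B * (1 - lam⁻¹)⁻¹ * (2 ^ ν' * dist x y ^ ν') :=
            le_mul_of_one_le_right h2B h2'
        _ = (2 * B * (1 - lam⁻¹)⁻¹ * 2 ^ ν') * dist x y ^ ν' := by ring
        _ ≤ max (C * (1 + 1/ε)) (2 * B * (1 - lam⁻¹)⁻¹ * 2 ^ ν') * dist x y ^ ν' :=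
            mul_le_mul_of_nonneg_right (le_max_right _ _) (Real.rpow_nonneg dist_nonneg _)
end
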